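/- arXiv:2002.00859 — 4 statements merged into one kernel-verified Lean document; each statement's English description precedes it below -/
import Mathlib

section
/- For p ≥ 1, the p-Wasserstein distance between two Borel probability measures μ, ν on ℝ with finite p-th moments equals the Lᵖ((0,1)) distance of their quantile functions: d_{W_p}(μ,ν) = (∫₀¹ |F_μ⁻¹(t) − F_ν⁻¹(t)|ᵖ dt)^{1/p}. -/
open MeasureTheory Set ProbabilityTheory Filter
open scoped ENNReal NNReal

noncomputable section

/-- Cumulative distribution function `F_μ(x) = μ((-∞,x])`. -/
def cdfR (μ : Measure ℝ) (x : ℝ) : ℝ := (μ (Set.Iic x)).toReal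

/-- Quantile function `F_μ⁻¹(t) = sup {x | F_μ(x) ≤ t}`. -/
def quantR (μ : Measure ℝ) (t : ℝ) : ℝ := sSup {x : ℝ | cdfR μ x ≤ t}


namespace WA

variable (μ : Measure ℝ) [IsProbabilityMeasure μ]

lemma cdfR_eq (x : ℝ) : cdfR μ x = cdf μ x := (cdf_eq_real μ x).symm

lemma cdfR_mono : Monotone (cdfR μ) := fun a b hab =>
  ENNReal.toReal_mono (measure_ne_top μ _) (measure_mono (Iic_subset_Iic.2 hab))

lemma quantSet_nonempty {t : ℝ} (ht : 0 < t) : {x : ℝ | cdfR μ x ≤ t}.Nonempty := by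
  have h := tendsto_cdf_atBot μ
  obtain ⟨x, hx⟩ := (h.eventually_lt_const ht).exists
  exact ⟨x, by rw [mem_setOf_eq, cdfR_eq]; exact hx.le⟩

lemma quantSet_bddAbove {t : ℝ} (ht : t < 1) : BddAbove {x : ℝ | cdfR μ x ≤ t} := by
  have h := tendsto_cdf_atTop μ
  obtain ⟨x₀, hx₀⟩ := (h.eventually_const_lt ht).exists
  refine ⟨x₀, fun x hx => ?_⟩
  by_contra hc
  push_neg at hc
  have := cdfR_mono μ hc.le
  rw [mem_setOf_eq, cdfR_eq] at hx
  rw [cdfR_eq, cdfR_eq] at this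
  linarith

end WA

namespace WA
variable (μ : Measure ℝ) [IsProbabilityMeasure μ]

lemma measure_Iio_eq (v : ℝ) : μ (Iio v) = ⨆ n : ℕ, μ (Iic (v - (n + 1 : ℝ)⁻¹)) := by
  have h : Iio v = ⋃ n : ℕ, Iic (v - (n + 1 : ℝ)⁻¹) := by
    ext x
    simp only [mem_Iio, mem_iUnion, mem_Iic]
    constructor
    · intro hx
      obtain ⟨n, hn⟩ := exists_nat_one_div_lt (sub_pos.2 hx)
      exact ⟨n, by rw [one_div] at hn; linarith⟩
    · rintro ⟨n, hn⟩
      have : (0:ℝ) < (n + 1 : ℝ)⁻¹ := by positivity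
      linarith
  rw [h]
  exact Monotone.measure_iUnion (fun a b hab => Iic_subset_Iic.2 (by
    have : (b + 1 : ℝ)⁻¹ ≤ (a + 1 : ℝ)⁻¹ := by
      apply inv_anti₀ (by positivity) (by exact_mod_cast Nat.succ_le_succ hab)
    linarith))

lemma measure_Iic_eq (u : ℝ) : μ (Iic u) = ⨅ n : ℕ, μ (Iio (u + (n + 1 : ℝ)⁻¹)) := by
  have h : Iic u = ⋂ n : ℕ, Iio (u + (n + 1 : ℝ)⁻¹) := by
    ext x
    simp only [mem_Iic, mem_iInter, mem_Iio]
    constructor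
    · intro hx n
      have : (0:ℝ) < (n + 1 : ℝ)⁻¹ := by positivity
      linarith
    · intro hx
      by_contra hc
      push_neg at hc
      obtain ⟨n, hn⟩ := exists_nat_one_div_lt (sub_pos.2 hc)
      have := hx n
      rw [one_div] at hn
      linarith
  rw [h]
  refine Antitone.measure_iInter (fun a b hab => Iio_subset_Iio (by
    have : (b + 1 : ℝ)⁻¹ ≤ (a + 1 : ℝ)⁻¹ := by
      apply inv_anti₀ (by positivity) (by exact_mod_cast Nat.succ_le_succ hab)
    linarith)) (fun n => (measurableSet_Iio).nullMeasurableSet) ⟨0, measure_ne_top μ _⟩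

lemma le_quant_iff {t : ℝ} (ht : t ∈ Ioo (0:ℝ) 1) (v : ℝ) :
    v ≤ quantR μ t ↔ (μ (Iio v)).toReal ≤ t := by
  constructor
  · intro hv
    by_contra hc
    push_neg at hc
    have h1 : ENNReal.ofReal t < μ (Iio v) :=
      (ENNReal.ofReal_lt_iff_lt_toReal ht.1.le (measure_ne_top μ _)).2 hc
    rw [measure_Iio_eq] at h1
    obtain ⟨n, hn⟩ := lt_iSup_iff.1 h1
    set w := v - (n + 1 : ℝ)⁻¹ with hw
    have hpos : (0:ℝ) < (n + 1 : ℝ)⁻¹ := by positivity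
    have hwv : w < v := by simp only [hw]; linarith
    have htw : t < cdfR μ w := by
      rw [cdfR]
      exact (ENNReal.ofReal_lt_iff_lt_toReal ht.1.le (measure_ne_top μ _)).1 hn
    have hq : quantR μ t ≤ w := by
      apply csSup_le (quantSet_nonempty μ ht.1)
      intro x hx
      rw [mem_setOf_eq] at hx
      by_contra hcx
      push_neg at hcx
      have := cdfR_mono μ hcx.le
      linarith
    linarith
  · intro hv
    have key : ∀ w, w < v → w ≤ quantR μ t := by
      intro w hwv
      apply le_csSup (quantSet_bddAbove μ ht.2)
      rw [mem_setOf_eq, cdfR]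
      calc (μ (Iic w)).toReal ≤ (μ (Iio v)).toReal :=
            ENNReal.toReal_mono (measure_ne_top μ _) (measure_mono (Iic_subset_Iio.2 hwv))
        _ ≤ t := hv
    by_contra hc
    push_neg at hc
    obtain ⟨w, hw1, hw2⟩ := exists_between hc
    exact absurd (key w hw2) (not_le.2 hw1)

lemma quant_le_of_lt {t : ℝ} (ht : t ∈ Ioo (0:ℝ) 1) {u : ℝ} (h : t < (μ (Iic u)).toReal) :
    quantR μ t ≤ u := by
  apply csSup_le (quantSet_nonempty μ ht.1)
  intro x hx
  rw [mem_setOf_eq, cdfR] at hx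
  by_contra hc
  push_neg at hc
  have := ENNReal.toReal_mono (measure_ne_top μ _) (measure_mono (Iic_subset_Iic.2 hc.le))
  linarith

lemma le_of_quant_le {t : ℝ} (ht : t ∈ Ioo (0:ℝ) 1) {u : ℝ} (h : quantR μ t ≤ u) :
    t ≤ (μ (Iic u)).toReal := by
  rw [← ENNReal.ofReal_le_iff_le_toReal (measure_ne_top μ _), measure_Iic_eq]
  refine le_iInf fun n => ?_
  set v := u + (n + 1 : ℝ)⁻¹ with hv
  have hpos : (0:ℝ) < (n + 1 : ℝ)⁻¹ := by positivity
  have huv : u < v := by simp only [hv]; linarith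
  have : ¬ v ≤ quantR μ t := fun hc => absurd (hc.trans h) (not_le.2 huv)
  rw [le_quant_iff μ ht] at this
  push_neg at this
  exact (ENNReal.ofReal_le_iff_le_toReal (measure_ne_top μ _)).2 this.le

end WA

namespace WA

lemma vol_squeeze {S : Set ℝ} {a b : ℝ} (h1 : Ioo b a ⊆ S) (h2 : S ⊆ Icc b a) :
    volume S = ENNReal.ofReal (a - b) := by
  refine le_antisymm ?_ ?_
  · calc volume S ≤ volume (Icc b a) := measure_mono h2
      _ = ENNReal.ofReal (a - b) := Real.volume_Icc
  · calc ENNReal.ofReal (a - b) = volume (Ioo b a) := Real.volume_Ioo.symm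
      _ ≤ volume S := measure_mono h1

lemma ofReal_toReal_sub {x y : ℝ≥0∞} (hx : x ≠ ⊤) (hy : y ≠ ⊤) :
    ENNReal.ofReal (x.toReal - y.toReal) = x - y := by
  rcases le_total x y with h | h
  · rw [tsub_eq_zero_of_le h, ENNReal.ofReal_eq_zero.2]
    simp [sub_nonpos.2 (ENNReal.toReal_mono hy h)]
  · rw [← ENNReal.toReal_sub_of_le h hx, ENNReal.ofReal_toReal (by
      simp [ENNReal.sub_eq_top_iff, hx])]

variable (μ : Measure ℝ) [IsProbabilityMeasure μ]

lemma toReal_le_one (s : Set ℝ) : (μ s).toReal ≤ 1 := by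
  have h : μ s ≤ 1 := prob_le_one
  simpa using ENNReal.toReal_mono (by simp) h

lemma vol_rect (ν : Measure ℝ) [IsProbabilityMeasure ν] (u v : ℝ) :
    volume (Ioo (0:ℝ) 1 ∩ {t | quantR μ t ≤ u ∧ v ≤ quantR ν t})
      = μ (Iic u) - ν (Iio v) := by
  set a := (μ (Iic u)).toReal with ha
  set b := (ν (Iio v)).toReal with hb
  have ha1 : a ≤ 1 := toReal_le_one μ _
  have hb0 : 0 ≤ b := ENNReal.toReal_nonneg
  rw [← ofReal_toReal_sub (measure_ne_top μ _) (measure_ne_top ν _), ← ha, ← hb]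
  apply vol_squeeze
  · intro t ht
    have ht01 : t ∈ Ioo (0:ℝ) 1 := ⟨lt_of_le_of_lt hb0 ht.1, lt_of_lt_of_le ht.2 ha1⟩
    refine ⟨ht01, quant_le_of_lt μ ht01 ht.2, ?_⟩
    exact (le_quant_iff ν ht01 v).2 (le_of_lt ht.1)
  · rintro t ⟨ht01, h1, h2⟩
    exact ⟨(le_quant_iff ν ht01 v).1 h2, le_of_quant_le μ ht01 h1⟩

def logit (t : ℝ) : ℝ := Real.log (t / (1 - t))
def logistic (s : ℝ) : ℝ := Real.exp s / (1 + Real.exp s)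

lemma logistic_mem_Ioo (s : ℝ) : logistic s ∈ Ioo (0:ℝ) 1 := by
  have h := Real.exp_pos s
  constructor
  · exact div_pos h (by linarith)
  · rw [logistic, div_lt_one (by linarith)]; linarith

lemma logistic_mono : Monotone logistic := by
  intro s s' hss
  have h1 := Real.exp_pos s
  have h2 := Real.exp_pos s'
  have h3 := Real.exp_le_exp.2 hss
  rw [logistic, logistic, div_le_div_iff₀ (by linarith) (by linarith)]
  nlinarith

lemma logistic_logit {t : ℝ} (h : t ∈ Ioo (0:ℝ) 1) : logistic (logit t) = t := by
  have h2 : (0:ℝ) < 1 - t := by linarith [h.2]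
  have h1 : 0 < t / (1 - t) := div_pos h.1 h2
  rw [logit, logistic, Real.exp_log h1]
  field_simp
  ring

lemma quant_monoOn : MonotoneOn (quantR μ) (Ioo (0:ℝ) 1) := by
  intro s hs t ht hst
  exact csSup_le_csSup (quantSet_bddAbove μ ht.2) (quantSet_nonempty μ hs.1)
    (fun x hx => le_trans hx hst)

lemma quant_aemeasurable : AEMeasurable (quantR μ) (volume.restrict (Ioo (0:ℝ) 1)) := by
  have hmono : Monotone (fun s => quantR μ (logistic s)) := fun s s' h =>
    quant_monoOn μ (logistic_mem_Ioo s) (logistic_mem_Ioo s') (logistic_mono h)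
  have hlogit : Measurable logit :=
    Real.measurable_log.comp (measurable_id.div (measurable_const.sub measurable_id))
  refine ⟨fun t => quantR μ (logistic (logit t)), hmono.measurable.comp hlogit, ?_⟩
  filter_upwards [self_mem_ae_restrict measurableSet_Ioo] with t ht
  rw [logistic_logit ht]

instance : IsProbabilityMeasure (volume.restrict (Ioo (0:ℝ) 1)) :=
  ⟨by rw [Measure.restrict_apply_univ, Real.volume_Ioo]; norm_num⟩

lemma map_quant : (volume.restrict (Ioo (0:ℝ) 1)).map (quantR μ) = μ := by
  have hq := quant_aemeasurable μ
  have : IsProbabilityMeasure ((volume.restrict (Ioo (0:ℝ) 1)).map (quantR μ)) :=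
    Measure.isProbabilityMeasure_map hq
  refine Measure.ext_of_Iic _ μ (fun u => ?_)
  rw [Measure.map_apply_of_aemeasurable hq measurableSet_Iic,
    Measure.restrict_apply' measurableSet_Ioo]
  set a := (μ (Iic u)).toReal with ha
  have ha1 : a ≤ 1 := toReal_le_one μ _
  have h0 : ENNReal.ofReal a = μ (Iic u) := by
    rw [ha, ENNReal.ofReal_toReal (measure_ne_top μ _)]
  rw [← h0, ← sub_zero a]
  apply vol_squeeze
  · intro t ht
    have ht01 : t ∈ Ioo (0:ℝ) 1 := ⟨ht.1, lt_of_lt_of_le ht.2 ha1⟩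
    exact ⟨quant_le_of_lt μ ht01 ht.2, ht01⟩
  · rintro t ⟨h1, ht01⟩
    exact ⟨ht01.1.le, le_of_quant_le μ ht01 h1⟩

end WA

namespace WA

lemma plus_decomp (s x y : ℝ) (hs : 0 ≤ s) :
    ENNReal.ofReal (|x - y| - s)
      = volume {u : ℝ | x ≤ u ∧ u + s ≤ y} + volume {u : ℝ | y ≤ u ∧ u + s ≤ x} := by
  have h1 : {u : ℝ | x ≤ u ∧ u + s ≤ y} = Icc x (y - s) := by
    ext u; simp only [mem_setOf_eq, mem_Icc, le_sub_iff_add_le]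
  have h2 : {u : ℝ | y ≤ u ∧ u + s ≤ x} = Icc y (x - s) := by
    ext u; simp only [mem_setOf_eq, mem_Icc, le_sub_iff_add_le]
  rw [h1, h2, Real.volume_Icc, Real.volume_Icc]
  rcases le_total x y with h | h
  · rw [abs_of_nonpos (by linarith), show ENNReal.ofReal (x - s - y) = 0 from
      ENNReal.ofReal_eq_zero.2 (by linarith), add_zero]
    ring_nf
  · rw [abs_of_nonneg (by linarith), show ENNReal.ofReal (y - s - x) = 0 from
      ENNReal.ofReal_eq_zero.2 (by linarith), zero_add]
    ring_nf

lemma fubini_sets (π : Measure (ℝ × ℝ)) [IsProbabilityMeasure π]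
    {B : Set ((ℝ × ℝ) × ℝ)} (hB : MeasurableSet B) :
    ∫⁻ q, volume {u : ℝ | (q, u) ∈ B} ∂π = ∫⁻ u, π {q : ℝ × ℝ | (q, u) ∈ B} ∂volume := by
  have h1 := Measure.prod_apply (μ := π) (ν := volume) hB
  have h2 := Measure.prod_apply_symm (μ := π) (ν := volume) hB
  rw [h1] at h2
  convert h2 using 2 <;> rfl

lemma setA_meas (s : ℝ) : MeasurableSet {z : (ℝ × ℝ) × ℝ | z.1.1 ≤ z.2 ∧ z.2 + s ≤ z.1.2} :=
  MeasurableSet.inter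
    (measurableSet_le measurable_fst.fst measurable_snd)
    (measurableSet_le (measurable_snd.add_const s) measurable_fst.snd)

lemma cost_slice (π : Measure (ℝ × ℝ)) [IsProbabilityMeasure π] (s : ℝ) (hs : 0 ≤ s) :
    ∫⁻ q : ℝ × ℝ, ENNReal.ofReal (|q.1 - q.2| - s) ∂π
      = ∫⁻ u, (π {q : ℝ × ℝ | q.1 ≤ u ∧ u + s ≤ q.2}
          + π {q : ℝ × ℝ | q.2 ≤ u ∧ u + s ≤ q.1}) ∂volume := by
  have e1 : ∫⁻ q : ℝ × ℝ, ENNReal.ofReal (|q.1 - q.2| - s) ∂π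
      = ∫⁻ q : ℝ × ℝ, (volume {u : ℝ | q.1 ≤ u ∧ u + s ≤ q.2}
          + volume {u : ℝ | q.2 ≤ u ∧ u + s ≤ q.1}) ∂π :=
    lintegral_congr fun q => plus_decomp s q.1 q.2 hs
  have hB1 := setA_meas s
  have hB2 : MeasurableSet {z : (ℝ × ℝ) × ℝ | z.1.2 ≤ z.2 ∧ z.2 + s ≤ z.1.1} :=
    MeasurableSet.inter
      (measurableSet_le measurable_fst.snd measurable_snd)
      (measurableSet_le (measurable_snd.add_const s) measurable_fst.fst)
  have m1 : Measurable fun q : ℝ × ℝ => volume {u : ℝ | q.1 ≤ u ∧ u + s ≤ q.2} :=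
    measurable_measure_prodMk_left (ν := volume) hB1
  have m2 : Measurable fun u : ℝ => π {q : ℝ × ℝ | q.1 ≤ u ∧ u + s ≤ q.2} :=
    measurable_measure_prodMk_right (μ := π) hB1
  rw [e1, lintegral_add_left m1, lintegral_add_left m2]
  congr 1
  · exact fubini_sets π hB1
  · exact fubini_sets π hB2

lemma cost_expand (ρ : Measure ℝ) [SFinite ρ] (hρ0 : ∀ᵐ s ∂ρ, 0 ≤ s) (p : ℝ)
    (hrep : ∀ L : ℝ, 0 ≤ L → ∫⁻ s, ENNReal.ofReal (L - s) ∂ρ = ENNReal.ofReal (L ^ p))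
    (π : Measure (ℝ × ℝ)) [IsProbabilityMeasure π] :
    ∫⁻ q : ℝ × ℝ, ENNReal.ofReal (|q.1 - q.2| ^ p) ∂π
      = ∫⁻ s, ∫⁻ u, (π {q : ℝ × ℝ | q.1 ≤ u ∧ u + s ≤ q.2}
          + π {q : ℝ × ℝ | q.2 ≤ u ∧ u + s ≤ q.1}) ∂volume ∂ρ := by
  have e1 : ∫⁻ q : ℝ × ℝ, ENNReal.ofReal (|q.1 - q.2| ^ p) ∂π
      = ∫⁻ q : ℝ × ℝ, ∫⁻ s, ENNReal.ofReal (|q.1 - q.2| - s) ∂ρ ∂π :=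
    lintegral_congr fun q => (hrep _ (abs_nonneg _)).symm
  have hmeas : AEMeasurable
      (Function.uncurry fun (q : ℝ × ℝ) (s : ℝ) => ENNReal.ofReal (|q.1 - q.2| - s))
      (π.prod ρ) := by
    apply Measurable.aemeasurable
    exact ((measurable_fst.fst.sub measurable_fst.snd).abs.sub measurable_snd).ennreal_ofReal
  rw [e1, lintegral_lintegral_swap hmeas]
  exact lintegral_congr_ae (hρ0.mono fun s hs => cost_slice π s hs)

lemma hoeffding_fst (μ ν : Measure ℝ) [IsProbabilityMeasure μ] [IsProbabilityMeasure ν]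
    (π : Measure (ℝ × ℝ)) [IsProbabilityMeasure π]
    (hπ1 : π.map Prod.fst = μ) (hπ2 : π.map Prod.snd = ν) (u v : ℝ) :
    μ (Iic u) - ν (Iio v) ≤ π {q : ℝ × ℝ | q.1 ≤ u ∧ v ≤ q.2} := by
  rw [tsub_le_iff_right]
  have h1 : μ (Iic u) = π {q : ℝ × ℝ | q.1 ≤ u} := by
    rw [← hπ1, Measure.map_apply measurable_fst measurableSet_Iic]; rfl
  have h2 : ν (Iio v) = π {q : ℝ × ℝ | q.2 < v} := by
    rw [← hπ2, Measure.map_apply measurable_snd measurableSet_Iio]; rfl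
  rw [h1, h2]
  calc π {q : ℝ × ℝ | q.1 ≤ u}
      ≤ π ({q : ℝ × ℝ | q.1 ≤ u ∧ v ≤ q.2} ∪ {q : ℝ × ℝ | q.2 < v}) := by
        apply measure_mono
        intro q hq
        rcases le_or_gt v q.2 with h | h
        · exact Or.inl ⟨hq, h⟩
        · exact Or.inr h
    _ ≤ π {q : ℝ × ℝ | q.1 ≤ u ∧ v ≤ q.2} + π {q : ℝ × ℝ | q.2 < v} := measure_union_le _ _

lemma hoeffding_snd (μ ν : Measure ℝ) [IsProbabilityMeasure μ] [IsProbabilityMeasure ν]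
    (π : Measure (ℝ × ℝ)) [IsProbabilityMeasure π]
    (hπ1 : π.map Prod.fst = μ) (hπ2 : π.map Prod.snd = ν) (u v : ℝ) :
    ν (Iic u) - μ (Iio v) ≤ π {q : ℝ × ℝ | q.2 ≤ u ∧ v ≤ q.1} := by
  rw [tsub_le_iff_right]
  have h1 : ν (Iic u) = π {q : ℝ × ℝ | q.2 ≤ u} := by
    rw [← hπ2, Measure.map_apply measurable_snd measurableSet_Iic]; rfl
  have h2 : μ (Iio v) = π {q : ℝ × ℝ | q.1 < v} := by
    rw [← hπ1, Measure.map_apply measurable_fst measurableSet_Iio]; rfl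
  rw [h1, h2]
  calc π {q : ℝ × ℝ | q.2 ≤ u}
      ≤ π ({q : ℝ × ℝ | q.2 ≤ u ∧ v ≤ q.1} ∪ {q : ℝ × ℝ | q.1 < v}) := by
        apply measure_mono
        intro q hq
        rcases le_or_gt v q.1 with h | h
        · exact Or.inl ⟨hq, h⟩
        · exact Or.inr h
    _ ≤ π {q : ℝ × ℝ | q.2 ≤ u ∧ v ≤ q.1} + π {q : ℝ × ℝ | q.1 < v} := measure_union_le _ _

end WA

namespace WA

variable (μ : Measure ℝ) [IsProbabilityMeasure μ] (ν : Measure ℝ) [IsProbabilityMeasure ν]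

lemma pair_aemeasurable : AEMeasurable (fun t => (quantR μ t, quantR ν t))
    (volume.restrict (Ioo (0:ℝ) 1)) :=
  (quant_aemeasurable μ).prodMk (quant_aemeasurable ν)

lemma sigma_rect_fst (u v : ℝ) :
    ((volume.restrict (Ioo (0:ℝ) 1)).map (fun t => (quantR μ t, quantR ν t)))
      {q : ℝ × ℝ | q.1 ≤ u ∧ v ≤ q.2} = μ (Iic u) - ν (Iio v) := by
  have hset : MeasurableSet {q : ℝ × ℝ | q.1 ≤ u ∧ v ≤ q.2} :=
    (measurableSet_le measurable_fst measurable_const).inter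
      (measurableSet_le measurable_const measurable_snd)
  rw [Measure.map_apply_of_aemeasurable (pair_aemeasurable μ ν) hset,
    Measure.restrict_apply' measurableSet_Ioo, inter_comm]
  exact vol_rect μ ν u v

lemma sigma_rect_snd (u v : ℝ) :
    ((volume.restrict (Ioo (0:ℝ) 1)).map (fun t => (quantR μ t, quantR ν t)))
      {q : ℝ × ℝ | q.2 ≤ u ∧ v ≤ q.1} = ν (Iic u) - μ (Iio v) := by
  have hset : MeasurableSet {q : ℝ × ℝ | q.2 ≤ u ∧ v ≤ q.1} :=
    (measurableSet_le measurable_snd measurable_const).inter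
      (measurableSet_le measurable_const measurable_fst)
  rw [Measure.map_apply_of_aemeasurable (pair_aemeasurable μ ν) hset,
    Measure.restrict_apply' measurableSet_Ioo, inter_comm]
  exact vol_rect ν μ u v

lemma cost_sigma_le (ρ : Measure ℝ) [SFinite ρ] (hρ0 : ∀ᵐ s ∂ρ, 0 ≤ s) (p : ℝ)
    (hrep : ∀ L : ℝ, 0 ≤ L → ∫⁻ s, ENNReal.ofReal (L - s) ∂ρ = ENNReal.ofReal (L ^ p))
    (π : Measure (ℝ × ℝ)) [IsProbabilityMeasure π]
    (hπ1 : π.map Prod.fst = μ) (hπ2 : π.map Prod.snd = ν) :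
    ∫⁻ q : ℝ × ℝ, ENNReal.ofReal (|q.1 - q.2| ^ p)
        ∂((volume.restrict (Ioo (0:ℝ) 1)).map (fun t => (quantR μ t, quantR ν t)))
      ≤ ∫⁻ q : ℝ × ℝ, ENNReal.ofReal (|q.1 - q.2| ^ p) ∂π := by
  have : IsProbabilityMeasure
      ((volume.restrict (Ioo (0:ℝ) 1)).map (fun t => (quantR μ t, quantR ν t))) :=
    Measure.isProbabilityMeasure_map (pair_aemeasurable μ ν)
  rw [cost_expand ρ hρ0 p hrep, cost_expand ρ hρ0 p hrep]
  refine lintegral_mono fun s => lintegral_mono fun u => add_le_add ?_ ?_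
  · rw [sigma_rect_fst μ ν]
    exact hoeffding_fst μ ν π hπ1 hπ2 u (u + s)
  · rw [sigma_rect_snd μ ν]
    exact hoeffding_snd μ ν π hπ1 hπ2 u (u + s)

lemma cost_abs_bound {p : ℝ} (hp : 1 ≤ p) (x y : ℝ) :
    |x - y| ^ p ≤ 2 ^ p * (|x| ^ p + |y| ^ p) := by
  have hp0 : 0 ≤ p := by linarith
  have h1 : |x - y| ≤ 2 * max |x| |y| := by
    calc |x - y| ≤ |x| + |y| := abs_sub x y
      _ ≤ 2 * max |x| |y| := by
          rcases le_total |x| |y| with h | h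
          · rw [max_eq_right h]; linarith
          · rw [max_eq_left h]; linarith
  calc |x - y| ^ p ≤ (2 * max |x| |y|) ^ p :=
        Real.rpow_le_rpow (abs_nonneg _) h1 hp0
    _ = 2 ^ p * (max |x| |y|) ^ p :=
        Real.mul_rpow (by norm_num) (le_max_iff.2 (Or.inl (abs_nonneg _)))
    _ ≤ 2 ^ p * (|x| ^ p + |y| ^ p) := by
        apply mul_le_mul_of_nonneg_left _ (Real.rpow_nonneg (by norm_num) p)
        rcases le_total |x| |y| with h | h
        · rw [max_eq_right h]
          nlinarith [Real.rpow_nonneg (abs_nonneg x) p]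
        · rw [max_eq_left h]
          nlinarith [Real.rpow_nonneg (abs_nonneg y) p]

lemma cost_measurable {p : ℝ} (hp : 1 ≤ p) :
    Measurable (fun q : ℝ × ℝ => |q.1 - q.2| ^ p) := by
  have hc : Continuous (fun q : ℝ × ℝ => |q.1 - q.2|) := (continuous_fst.sub continuous_snd).abs
  exact (hc.rpow_const (fun q => Or.inr (by linarith))).measurable

lemma abs_rpow_measurable {p : ℝ} (hp : 1 ≤ p) : Measurable (fun x : ℝ => |x| ^ p) :=
  (continuous_abs.rpow_const (fun q => Or.inr (by linarith))).measurable

lemma cost_lt_top {p : ℝ} (hp : 1 ≤ p) (π : Measure (ℝ × ℝ)) [IsProbabilityMeasure π]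
    (hπ1 : π.map Prod.fst = μ) (hπ2 : π.map Prod.snd = ν)
    (hμ : Integrable (fun x => |x| ^ p) μ) (hν : Integrable (fun x => |x| ^ p) ν) :
    ∫⁻ q : ℝ × ℝ, ENNReal.ofReal (|q.1 - q.2| ^ p) ∂π < ⊤ := by
  have hμ' : ∫⁻ x, ENNReal.ofReal (|x| ^ p) ∂μ < ⊤ := by
    rw [← hasFiniteIntegral_iff_ofReal (Eventually.of_forall fun x => Real.rpow_nonneg (abs_nonneg x) p)]
    exact hμ.hasFiniteIntegral
  have hν' : ∫⁻ x, ENNReal.ofReal (|x| ^ p) ∂ν < ⊤ := by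
    rw [← hasFiniteIntegral_iff_ofReal (Eventually.of_forall fun x => Real.rpow_nonneg (abs_nonneg x) p)]
    exact hν.hasFiniteIntegral
  have h1 : ∫⁻ q : ℝ × ℝ, ENNReal.ofReal (|q.1| ^ p) ∂π = ∫⁻ x, ENNReal.ofReal (|x| ^ p) ∂μ := by
    rw [← hπ1, lintegral_map (abs_rpow_measurable hp).ennreal_ofReal measurable_fst]
  have h2 : ∫⁻ q : ℝ × ℝ, ENNReal.ofReal (|q.2| ^ p) ∂π = ∫⁻ x, ENNReal.ofReal (|x| ^ p) ∂ν := by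
    rw [← hπ2, lintegral_map (abs_rpow_measurable hp).ennreal_ofReal measurable_snd]
  have key : ∫⁻ q : ℝ × ℝ, ENNReal.ofReal (|q.1 - q.2| ^ p) ∂π
      ≤ ENNReal.ofReal (2 ^ p) *
        (∫⁻ q : ℝ × ℝ, ENNReal.ofReal (|q.1| ^ p) ∂π + ∫⁻ q : ℝ × ℝ, ENNReal.ofReal (|q.2| ^ p) ∂π) := by
    rw [← lintegral_add_left
        (show Measurable fun q : ℝ × ℝ => ENNReal.ofReal (|q.1| ^ p) from
          ((abs_rpow_measurable hp).comp measurable_fst).ennreal_ofReal),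
      ← lintegral_const_mul _
        (show Measurable fun q : ℝ × ℝ => ENNReal.ofReal (|q.1| ^ p) + ENNReal.ofReal (|q.2| ^ p) from
          (((abs_rpow_measurable hp).comp measurable_fst).ennreal_ofReal.add
            (((abs_rpow_measurable hp).comp measurable_snd).ennreal_ofReal)))]
    refine lintegral_mono fun q => ?_
    calc ENNReal.ofReal (|q.1 - q.2| ^ p) ≤ ENNReal.ofReal (2 ^ p * (|q.1| ^ p + |q.2| ^ p)) :=
          ENNReal.ofReal_le_ofReal (cost_abs_bound hp q.1 q.2)
      _ = ENNReal.ofReal (2 ^ p) * (ENNReal.ofReal (|q.1| ^ p) + ENNReal.ofReal (|q.2| ^ p)) := by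
          rw [ENNReal.ofReal_mul (Real.rpow_nonneg (by norm_num) p),
            ENNReal.ofReal_add (Real.rpow_nonneg (abs_nonneg _) p) (Real.rpow_nonneg (abs_nonneg _) p)]
  refine lt_of_le_of_lt key ?_
  rw [h1, h2]
  exact ENNReal.mul_lt_top ENNReal.ofReal_lt_top (ENNReal.add_lt_top.2 ⟨hμ', hν'⟩)

end WA

namespace WA

lemma rep_dirac : ∀ L : ℝ, 0 ≤ L →
    ∫⁻ s, ENNReal.ofReal (L - s) ∂(Measure.dirac (0:ℝ)) = ENNReal.ofReal (L ^ (1:ℝ)) := by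
  intro L hL
  rw [lintegral_dirac (0:ℝ) (fun s => ENNReal.ofReal (L - s)), sub_zero, Real.rpow_one]

lemma rep_dirac_nonneg : ∀ᵐ s ∂(Measure.dirac (0:ℝ)), 0 ≤ s := by
  rw [show (fun s : ℝ => 0 ≤ s) = fun s : ℝ => s ∈ Ici (0:ℝ) from rfl] at *
  exact (ae_dirac_iff measurableSet_Ici).2 (by simp)

def rhoD (p : ℝ) : Measure ℝ :=
  (volume.restrict (Ioi (0:ℝ))).withDensity
    (fun s => ENNReal.ofReal (p * (p - 1) * Real.exp (Real.log s * (p - 2))))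

instance (p : ℝ) : SFinite (rhoD p) := by unfold rhoD; infer_instance

lemma rhoD_nonneg (p : ℝ) : ∀ᵐ s ∂(rhoD p), 0 ≤ s := by
  apply (withDensity_absolutelyContinuous _ _).ae_le
  filter_upwards [self_mem_ae_restrict measurableSet_Ioi] with s hs
  exact le_of_lt hs

lemma rep_rhoD {p : ℝ} (hp : 1 < p) : ∀ L : ℝ, 0 ≤ L →
    ∫⁻ s, ENNReal.ofReal (L - s) ∂(rhoD p) = ENNReal.ofReal (L ^ p) := by
  intro L hL
  have hd : Measurable fun s : ℝ =>
      ENNReal.ofReal (p * (p - 1) * Real.exp (Real.log s * (p - 2))) :=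
    (measurable_const.mul (Real.measurable_exp.comp
      (Real.measurable_log.mul measurable_const))).ennreal_ofReal
  have hf : Measurable fun s : ℝ => ENNReal.ofReal (L - s) :=
    (measurable_const.sub measurable_id).ennreal_ofReal
  rw [rhoD, lintegral_withDensity_eq_lintegral_mul _ hd hf]
  rcases eq_or_lt_of_le hL with h0 | hL0
  · have hz : ∀ᵐ s ∂(volume.restrict (Ioi (0:ℝ))),
        ((fun s => ENNReal.ofReal (p * (p - 1) * Real.exp (Real.log s * (p - 2)))) *
          (fun s => ENNReal.ofReal (L - s))) s = 0 := by
      filter_upwards [self_mem_ae_restrict measurableSet_Ioi] with s hs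
      have : ENNReal.ofReal (L - s) = 0 := ENNReal.ofReal_eq_zero.2 (by
        rw [← h0] at *; simp only [zero_sub]; linarith [mem_Ioi.1 hs])
      simp [this]
    rw [lintegral_congr_ae hz, lintegral_zero, ← h0, Real.zero_rpow (by linarith), ENNReal.ofReal_zero]
  · -- 0 < L
    have hsplit : Ioc (0:ℝ) L ∪ Ioi L = Ioi 0 := Ioc_union_Ioi_eq_Ioi hL
    set F := ((fun s => ENNReal.ofReal (p * (p - 1) * Real.exp (Real.log s * (p - 2)))) *
          (fun s => ENNReal.ofReal (L - s))) with hF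
    have hcalc : ∫⁻ s in Ioi (0:ℝ), F s = (∫⁻ s in Ioc (0:ℝ) L, F s) + ∫⁻ s in Ioi L, F s := by
      rw [← hsplit, lintegral_union measurableSet_Ioi Ioc_disjoint_Ioi_same]
    have htail : ∫⁻ s in Ioi L, F s = 0 := by
      have hz : ∀ᵐ s ∂(volume.restrict (Ioi L)), F s = 0 := by
        filter_upwards [self_mem_ae_restrict measurableSet_Ioi] with s hs
        have : ENNReal.ofReal (L - s) = 0 := ENNReal.ofReal_eq_zero.2 (by linarith [mem_Ioi.1 hs])
        simp [hF, this]
      rw [lintegral_congr_ae hz, lintegral_zero]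
    set g : ℝ → ℝ := fun s => p * (p - 1) * (L * s ^ (p - 2) - s ^ (p - 1)) with hg
    have hae : ∀ s ∈ Ioc (0:ℝ) L, F s = ENNReal.ofReal (g s) := by
      intro s hs
      have hs0 : (0:ℝ) < s := hs.1
      have hrw : Real.exp (Real.log s * (p - 2)) = s ^ (p - 2) := by
        rw [Real.rpow_def_of_pos hs0]
      have hnn : 0 ≤ p * (p - 1) * Real.exp (Real.log s * (p - 2)) := by
        apply mul_nonneg (by nlinarith) (Real.exp_nonneg _)
      have : F s = ENNReal.ofReal ((p * (p - 1) * Real.exp (Real.log s * (p - 2))) * (L - s)) := by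
        rw [hF, Pi.mul_apply, ENNReal.ofReal_mul hnn]
      rw [this, hrw]
      congr 1
      have hpow : s ^ (p - 1) = s ^ (p - 2) * s := by
        rw [show p - 1 = (p - 2) + 1 by ring, Real.rpow_add_one (ne_of_gt hs0)]
      simp only [hg]
      rw [hpow]; ring
    have hmain : ∫⁻ s in Ioc (0:ℝ) L, F s = ∫⁻ s in Ioc (0:ℝ) L, ENNReal.ofReal (g s) :=
      setLIntegral_congr_fun measurableSet_Ioc hae
    have i1 : IntervalIntegrable (fun s : ℝ => s ^ (p - 2)) volume 0 L :=
      intervalIntegral.intervalIntegrable_rpow' (by linarith)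
    have i2 : IntervalIntegrable (fun s : ℝ => s ^ (p - 1)) volume 0 L :=
      intervalIntegral.intervalIntegrable_rpow' (by linarith)
    have i3 : IntervalIntegrable g volume 0 L := by
      have := ((i1.const_mul L).sub i2).const_mul (p * (p - 1))
      simpa [hg, mul_sub] using this
    have hInt : IntegrableOn g (Ioc (0:ℝ) L) volume :=
      (intervalIntegrable_iff_integrableOn_Ioc_of_le hL).1 i3
    have hgnn : 0 ≤ᵐ[volume.restrict (Ioc (0:ℝ) L)] g := by
      filter_upwards [self_mem_ae_restrict measurableSet_Ioc] with s hs
      have hs0 : (0:ℝ) < s := hs.1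
      have h1 : 0 ≤ s ^ (p - 2) := Real.rpow_nonneg hs0.le _
      have hpow : s ^ (p - 1) = s ^ (p - 2) * s := by
        rw [show p - 1 = (p - 2) + 1 by ring, Real.rpow_add_one (ne_of_gt hs0)]
      have h2 : s ^ (p - 1) ≤ L * s ^ (p - 2) := by
        rw [hpow, mul_comm L]
        exact mul_le_mul_of_nonneg_left hs.2 h1
      simp only [Pi.zero_apply, hg]
      exact mul_nonneg (by nlinarith) (by linarith)
    have hp1 : p - 1 ≠ 0 := by linarith
    have hp0 : p ≠ 0 := by linarith
    have r1 : ∫ x in (0:ℝ)..L, x ^ (p - 2) = L ^ (p - 1) / (p - 1) := by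
      rw [integral_rpow (Or.inl (by linarith : (-1:ℝ) < p - 2)),
        show p - 2 + 1 = p - 1 by ring, Real.zero_rpow hp1, sub_zero]
    have r2 : ∫ x in (0:ℝ)..L, x ^ (p - 1) = L ^ p / p := by
      rw [integral_rpow (Or.inl (by linarith : (-1:ℝ) < p - 1)),
        show p - 1 + 1 = p by ring, Real.zero_rpow hp0, sub_zero]
    have hval : ∫ s in Ioc (0:ℝ) L, g s = L ^ p := by
      rw [← intervalIntegral.integral_of_le hL]
      have e1 : ∫ s in (0:ℝ)..L, g s
          = p * (p - 1) * (L * (L ^ (p - 1) / (p - 1)) - L ^ p / p) := by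
        simp only [hg]
        rw [intervalIntegral.integral_const_mul,
          intervalIntegral.integral_sub (i1.const_mul L) i2,
          intervalIntegral.integral_const_mul, r1, r2]
      rw [e1]
      have hLp : L * L ^ (p - 1) = L ^ p := by
        rw [mul_comm, ← Real.rpow_add_one (ne_of_gt hL0)]
        norm_num
      rw [mul_div_assoc'] at *
      rw [show L * L ^ (p - 1) / (p - 1) = L ^ p / (p - 1) by rw [hLp]]
      field_simp
      ring
    rw [hcalc, htail, add_zero, hmain, ← ofReal_integral_eq_lintegral_ofReal hInt hgnn, hval]

end WA

namespace WA

lemma integral_cost_eq {p : ℝ} (hp : 1 ≤ p) (π : Measure (ℝ × ℝ)) :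
    ∫ q : ℝ × ℝ, |q.1 - q.2| ^ p ∂π
      = (∫⁻ q : ℝ × ℝ, ENNReal.ofReal (|q.1 - q.2| ^ p) ∂π).toReal := by
  rw [integral_eq_lintegral_of_nonneg_ae
    (Eventually.of_forall fun q => Real.rpow_nonneg (abs_nonneg _) p)
    (cost_measurable hp).aestronglyMeasurable]

lemma main (p : ℝ) (hp : 1 ≤ p)
    (μ ν : Measure ℝ) [IsProbabilityMeasure μ] [IsProbabilityMeasure ν]
    (hμ : Integrable (fun x => |x| ^ p) μ) (hν : Integrable (fun x => |x| ^ p) ν)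
    (ρ : Measure ℝ) [SFinite ρ] (hρ0 : ∀ᵐ s ∂ρ, 0 ≤ s)
    (hrep : ∀ L : ℝ, 0 ≤ L → ∫⁻ s, ENNReal.ofReal (L - s) ∂ρ = ENNReal.ofReal (L ^ p)) :
    sInf {r : ℝ | ∃ π : Measure (ℝ × ℝ), IsProbabilityMeasure π ∧
        π.map Prod.fst = μ ∧ π.map Prod.snd = ν ∧ r = ∫ q, |q.1 - q.2| ^ p ∂π}
      = ∫ t in (0:ℝ)..1, |quantR μ t - quantR ν t| ^ p := by
  set σ := (volume.restrict (Ioo (0:ℝ) 1)).map (fun t => (quantR μ t, quantR ν t)) with hσdef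
  haveI hσp : IsProbabilityMeasure σ := Measure.isProbabilityMeasure_map (pair_aemeasurable μ ν)
  have hσ1 : σ.map Prod.fst = μ := by
    rw [hσdef, AEMeasurable.map_map_of_aemeasurable measurable_fst.aemeasurable (pair_aemeasurable μ ν)]
    exact map_quant μ
  have hσ2 : σ.map Prod.snd = ν := by
    rw [hσdef, AEMeasurable.map_map_of_aemeasurable measurable_snd.aemeasurable (pair_aemeasurable μ ν)]
    exact map_quant ν
  set S := {r : ℝ | ∃ π : Measure (ℝ × ℝ), IsProbabilityMeasure π ∧
      π.map Prod.fst = μ ∧ π.map Prod.snd = ν ∧ r = ∫ q, |q.1 - q.2| ^ p ∂π} with hS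
  set V := ∫ q : ℝ × ℝ, |q.1 - q.2| ^ p ∂σ with hV
  have hmem : V ∈ S := ⟨σ, hσp, hσ1, hσ2, rfl⟩
  have hlb : ∀ r ∈ S, V ≤ r := by
    rintro r ⟨π, hπp, hπ1, hπ2, rfl⟩
    haveI := hπp
    rw [hV, integral_cost_eq hp, integral_cost_eq hp]
    apply ENNReal.toReal_mono (ne_of_lt (cost_lt_top μ ν hp π hπ1 hπ2 hμ hν))
    exact cost_sigma_le μ ν ρ hρ0 p hrep π hπ1 hπ2
  have hsInf : sInf S = V := le_antisymm (csInf_le ⟨V, hlb⟩ hmem) (le_csInf ⟨V, hmem⟩ hlb)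
  rw [hsInf, hV, hσdef,
    integral_map (pair_aemeasurable μ ν) (cost_measurable hp).aestronglyMeasurable]
  rw [intervalIntegral.integral_of_le zero_le_one, integral_Ioc_eq_integral_Ioo]

end WA

/-- The `p`-Wasserstein distance (the `p`-th root of the infimum of transport costs over
couplings) of two probability measures on `ℝ` with finite `p`-th moments equals the
`Lᵖ((0,1))` distance of their quantile functions. -/
theorem wasserstein_eq_quantile_Lp (p : ℝ) (hp : 1 ≤ p)
    (μ ν : Measure ℝ) [IsProbabilityMeasure μ] [IsProbabilityMeasure ν]
    (hμ : Integrable (fun x => |x| ^ p) μ) (hν : Integrable (fun x => |x| ^ p) ν) :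
    (sInf {r : ℝ | ∃ π : Measure (ℝ × ℝ), IsProbabilityMeasure π ∧
        π.map Prod.fst = μ ∧ π.map Prod.snd = ν ∧ r = ∫ q, |q.1 - q.2| ^ p ∂π}) ^ (1 / p)
      = (∫ t in (0:ℝ)..1, |quantR μ t - quantR ν t| ^ p) ^ (1 / p) := by
  rcases eq_or_lt_of_le hp with h1 | h1
  · rw [WA.main p hp μ ν hμ hν (Measure.dirac 0) WA.rep_dirac_nonneg (by rw [← h1]; exact WA.rep_dirac)]
  · rw [WA.main p hp μ ν hμ hν (WA.rhoD p) (WA.rhoD_nonneg p) (WA.rep_rhoD h1)]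
end
end

section
/- Fix t ∈ [0,1] and let S_t := {μ ∈ W₁([0,1]) : d_{W₁}(δ₀,μ) = t}. Then for all ρ, σ ∈ S_t one has d_{W₁}(ρ,σ) ≤ 2t(1−t), and equality holds if and only if {ρ,σ} = {(1−t)δ₀ + tδ₁, δ_t}. -/
open MeasureTheory Set

noncomputable section

/-- Cumulative distribution function of a measure on `[0,1]`: `F_μ(x) = μ([0,x])`. -/
def cdfI (μ : Measure ℝ) (x : ℝ) : ℝ := (μ (Set.Icc 0 x)).toReal

/-- The Wasserstein space `W₁([0,1])`, realized as the set of Borel probability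
measures on `ℝ` concentrated on `[0,1]`. -/
def P01 : Set (Measure ℝ) := {μ | IsProbabilityMeasure μ ∧ μ (Set.Icc 0 1) = 1}

/-- Vallender's formula for the 1-Wasserstein distance on `[0,1]`. -/
def dW1I (μ ν : Measure ℝ) : ℝ := ∫ x in (0:ℝ)..1, |cdfI μ x - cdfI ν x|

namespace SliceAux

/-- The reference measure: Lebesgue on `(0,1]`. -/
def μ01 : Measure ℝ := volume.restrict (Set.Ioc 0 1)

instance : IsProbabilityMeasure μ01 := by
  constructor
  rw [μ01, Measure.restrict_apply_univ]
  simp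

lemma cdfI_nonneg (μ : Measure ℝ) (x : ℝ) : 0 ≤ cdfI μ x := ENNReal.toReal_nonneg

lemma cdfI_mono (μ : Measure ℝ) [IsFiniteMeasure μ] : Monotone (cdfI μ) := fun x y hxy =>
  ENNReal.toReal_mono (measure_ne_top _ _) (measure_mono (Icc_subset_Icc le_rfl hxy))

lemma P01.prob {μ : Measure ℝ} (h : μ ∈ P01) : IsProbabilityMeasure μ := h.1

lemma cdfI_le_one {μ : Measure ℝ} (h : μ ∈ P01) (x : ℝ) : cdfI μ x ≤ 1 := by
  haveI := h.1
  have : μ (Set.Icc 0 x) ≤ 1 := le_trans (measure_mono (subset_univ _)) (by simp)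
  simpa [cdfI] using ENNReal.toReal_le_of_le_ofReal one_pos.le (by simpa using this)

lemma cdfI_of_one_le {μ : Measure ℝ} (h : μ ∈ P01) {x : ℝ} (hx : 1 ≤ x) : cdfI μ x = 1 := by
  haveI := h.1
  have h1 : μ (Set.Icc 0 x) ≥ μ (Set.Icc 0 1) := measure_mono (Icc_subset_Icc le_rfl hx)
  have h2 : μ (Set.Icc 0 x) ≤ 1 := le_trans (measure_mono (subset_univ _)) (by simp)
  have : μ (Set.Icc 0 x) = 1 := le_antisymm h2 (h.2 ▸ h1)
  simp [cdfI, this]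

lemma compl_null {μ : Measure ℝ} (h : μ ∈ P01) : μ (Set.Icc 0 1)ᶜ = 0 := by
  haveI := h.1
  rw [measure_compl measurableSet_Icc (by simp [h.2] : μ (Set.Icc 0 1) ≠ ⊤), h.2]
  simp

lemma Iio_null {μ : Measure ℝ} (h : μ ∈ P01) : μ (Set.Iio 0) = 0 :=
  measure_mono_null (fun x hx => by simp at hx ⊢; intro h0; linarith) (compl_null h)

lemma measure_Iic {μ : Measure ℝ} (h : μ ∈ P01) {x : ℝ} (hx : 0 ≤ x) :
    μ (Set.Iic x) = μ (Set.Icc 0 x) := by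
  have : Set.Iic x = Set.Icc 0 x ∪ Set.Iio 0 := by
    ext z; simp only [mem_Iic, mem_union, mem_Icc, mem_Iio]
    constructor
    · intro hz; rcases le_or_gt 0 z with h0 | h0
      · exact Or.inl ⟨h0, hz⟩
      · exact Or.inr h0
    · rintro (⟨_, hz⟩ | hz); exact hz; linarith
  rw [this]
  refine le_antisymm ?_ (measure_mono subset_union_left)
  calc μ (Set.Icc 0 x ∪ Set.Iio 0) ≤ μ (Set.Icc 0 x) + μ (Set.Iio 0) := measure_union_le _ _
  _ = μ (Set.Icc 0 x) := by rw [Iio_null h, add_zero]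

lemma cdfI_dirac0 {x : ℝ} (hx : 0 ≤ x) : cdfI (Measure.dirac 0) x = 1 := by
  rw [cdfI, Measure.dirac_apply' _ measurableSet_Icc]
  simp [Set.indicator, hx]

lemma dirac_mem_P01 {s : ℝ} (h0 : 0 ≤ s) (h1 : s ≤ 1) : Measure.dirac s ∈ P01 := by
  refine ⟨by infer_instance, ?_⟩
  rw [Measure.dirac_apply' _ measurableSet_Icc]
  simp [Set.indicator, h0, h1]


lemma integrable_of_bounded {α : Type*} [MeasurableSpace α] {μ : Measure α} [IsFiniteMeasure μ]
    {f : α → ℝ} (hf : AEStronglyMeasurable f μ) {C : ℝ} (h : ∀ x, |f x| ≤ C) : Integrable f μ :=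
  ⟨hf, HasFiniteIntegral.of_bounded (C := C) (ae_of_all _ (by simpa [Real.norm_eq_abs] using h))⟩

lemma dW1I_eq (μ ν : Measure ℝ) : dW1I μ ν = ∫ x, |cdfI μ x - cdfI ν x| ∂μ01 := by
  rw [dW1I, intervalIntegral.integral_of_le zero_le_one]; rfl

lemma cdfI_integrable {μ : Measure ℝ} (h : μ ∈ P01) : Integrable (cdfI μ) μ01 := by
  haveI := h.1
  refine integrable_of_bounded ((cdfI_mono μ).measurable).aestronglyMeasurable (C := 1)
    (fun x => abs_le.2 ⟨by linarith [cdfI_nonneg μ x], cdfI_le_one h x⟩)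

lemma int_cdfI {μ : Measure ℝ} (h : μ ∈ P01) {t : ℝ} (ht : dW1I (Measure.dirac 0) μ = t) :
    ∫ x, cdfI μ x ∂μ01 = 1 - t := by
  haveI := h.1
  rw [dW1I_eq] at ht
  have he : ∫ x, |cdfI (Measure.dirac 0) x - cdfI μ x| ∂μ01 = ∫ x, (1 - cdfI μ x) ∂μ01 := by
    refine integral_congr_ae ?_
    filter_upwards [ae_restrict_mem measurableSet_Ioc] with x hx
    rw [cdfI_dirac0 hx.1.le, abs_of_nonneg (by linarith [cdfI_le_one h x])]
  rw [he, integral_sub (integrable_const 1) (cdfI_integrable h), integral_const] at ht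
  simp at ht; linarith

section Cheb
variable {F G : ℝ → ℝ}

lemma monovary_nonneg (hFm : Monotone F) (hGm : Monotone G) (p : ℝ × ℝ) :
    0 ≤ (F p.1 - F p.2) * (G p.1 - G p.2) := by
  rcases le_total p.1 p.2 with h | h
  · nlinarith [hFm h, hGm h]
  · nlinarith [hFm h, hGm h]

lemma prod_integrable (hF : Measurable F) (hG : Measurable G)
    (hFb : ∀ x, |F x| ≤ 1) (hGb : ∀ x, |G x| ≤ 1)
    (i j : ℝ × ℝ → ℝ) (hi : i = Prod.fst ∨ i = Prod.snd) (hj : j = Prod.fst ∨ j = Prod.snd) :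
    Integrable (fun p : ℝ × ℝ => F (i p) * G (j p)) (μ01.prod μ01) := by
  have mi : Measurable i := by rcases hi with rfl | rfl <;> measurability
  have mj : Measurable j := by rcases hj with rfl | rfl <;> measurability
  refine integrable_of_bounded ((hF.comp mi).mul (hG.comp mj)).aestronglyMeasurable (C := 1)
    (fun p => ?_)
  rw [abs_mul]
  exact mul_le_one₀ (hFb _) (abs_nonneg _) (hGb _)

lemma double_int (hF : Measurable F) (hG : Measurable G)
    (hFb : ∀ x, |F x| ≤ 1) (hGb : ∀ x, |G x| ≤ 1) :
    ∫ p, (F p.1 - F p.2) * (G p.1 - G p.2) ∂(μ01.prod μ01)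
      = 2 * ((∫ x, F x * G x ∂μ01) - (∫ x, F x ∂μ01) * (∫ x, G x ∂μ01)) := by
  have i11 := prod_integrable hF hG hFb hGb _ _ (Or.inl rfl) (Or.inl rfl)
  have i12 := prod_integrable hF hG hFb hGb _ _ (Or.inl rfl) (Or.inr rfl)
  have i21 := prod_integrable hF hG hFb hGb _ _ (Or.inr rfl) (Or.inl rfl)
  have i22 := prod_integrable hF hG hFb hGb _ _ (Or.inr rfl) (Or.inr rfl)
  have hsplit : (fun p : ℝ × ℝ => (F p.1 - F p.2) * (G p.1 - G p.2))
      = fun p => (F p.1 * G p.1 - F p.1 * G p.2) - (F p.2 * G p.1 - F p.2 * G p.2) := by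
    funext p; ring
  have isub1 : Integrable (fun p : ℝ × ℝ => F p.1 * G p.1 - F p.1 * G p.2) (μ01.prod μ01) :=
    i11.sub i12
  have isub2 : Integrable (fun p : ℝ × ℝ => F p.2 * G p.1 - F p.2 * G p.2) (μ01.prod μ01) :=
    i21.sub i22
  rw [hsplit, integral_sub isub1 isub2, integral_sub i11 i12, integral_sub i21 i22]
  have e11 : ∫ p, F p.1 * G p.1 ∂(μ01.prod μ01) = ∫ x, F x * G x ∂μ01 := by
    have := integral_prod_mul (μ := μ01) (ν := μ01) (fun x => F x * G x) (fun _ => (1:ℝ))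
    simpa using this
  have e22 : ∫ p, F p.2 * G p.2 ∂(μ01.prod μ01) = ∫ x, F x * G x ∂μ01 := by
    have := integral_prod_mul (μ := μ01) (ν := μ01) (fun _ => (1:ℝ)) (fun x => F x * G x)
    simpa using this
  have e12 : ∫ p, F p.1 * G p.2 ∂(μ01.prod μ01)
      = (∫ x, F x ∂μ01) * (∫ x, G x ∂μ01) := integral_prod_mul F G
  have e21 : ∫ p, F p.2 * G p.1 ∂(μ01.prod μ01)
      = (∫ x, F x ∂μ01) * (∫ x, G x ∂μ01) := by
    have := integral_prod_mul (μ := μ01) (ν := μ01) G F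
    have h2 : ∫ p, F p.2 * G p.1 ∂(μ01.prod μ01) = ∫ p, G p.1 * F p.2 ∂(μ01.prod μ01) := by
      congr 1; funext p; ring
    rw [h2, this]; ring
  rw [e11, e22, e12, e21]; ring

lemma cheb_le (hFm : Monotone F) (hGm : Monotone G)
    (hFb : ∀ x, |F x| ≤ 1) (hGb : ∀ x, |G x| ≤ 1) :
    (∫ x, F x ∂μ01) * (∫ x, G x ∂μ01) ≤ ∫ x, F x * G x ∂μ01 := by
  have h0 : 0 ≤ ∫ p, (F p.1 - F p.2) * (G p.1 - G p.2) ∂(μ01.prod μ01) :=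
    integral_nonneg (monovary_nonneg hFm hGm)
  rw [double_int hFm.measurable hGm.measurable hFb hGb] at h0
  linarith

lemma cheb_eq (hFm : Monotone F) (hGm : Monotone G)
    (hFb : ∀ x, |F x| ≤ 1) (hGb : ∀ x, |G x| ≤ 1)
    (heq : ∫ x, F x * G x ∂μ01 = (∫ x, F x ∂μ01) * (∫ x, G x ∂μ01)) :
    ∀ x y : ℝ, 0 < x → x < y → y < 1 → F x = F y ∨ G x = G y := by
  intro x y hx hxy hy1
  by_contra hcon
  push_neg at hcon
  have hFxy : F x < F y := lt_of_le_of_ne (hFm hxy.le) hcon.1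
  have hGxy : G x < G y := lt_of_le_of_ne (hGm hxy.le) hcon.2
  set H : ℝ × ℝ → ℝ := fun p => (F p.1 - F p.2) * (G p.1 - G p.2) with hH
  have hHi : Integrable H (μ01.prod μ01) := by
    refine integrable_of_bounded
      (((hFm.measurable.comp measurable_fst).sub (hFm.measurable.comp measurable_snd)).mul
        ((hGm.measurable.comp measurable_fst).sub (hGm.measurable.comp measurable_snd))).aestronglyMeasurable
      (C := 4) (fun p => ?_)
    rw [abs_mul]
    have h1 : |F p.1 - F p.2| ≤ 2 := by
      have := hFb p.1; have := hFb p.2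
      rw [abs_le] at *; constructor <;> [linarith; linarith]
    have h2 : |G p.1 - G p.2| ≤ 2 := by
      have := hGb p.1; have := hGb p.2
      rw [abs_le] at *; constructor <;> [linarith; linarith]
    nlinarith [abs_nonneg (F p.1 - F p.2), abs_nonneg (G p.1 - G p.2)]
  have hint0 : ∫ p, H p ∂(μ01.prod μ01) = 0 := by
    rw [hH, double_int hFm.measurable hGm.measurable hFb hGb, heq]; ring
  have hae : H =ᵐ[μ01.prod μ01] 0 :=
    (integral_eq_zero_iff_of_nonneg (monovary_nonneg hFm hGm) hHi).mp hint0
  have hnull : (μ01.prod μ01) {p | H p ≠ 0} = 0 := by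
    have := hae
    rw [Filter.EventuallyEq, ae_iff] at this
    simpa using this
  have hsub : (Set.Ioc 0 x ×ˢ Set.Ico y 1 : Set (ℝ × ℝ)) ⊆ {p | H p ≠ 0} := by
    rintro ⟨u, v⟩ ⟨hu, hv⟩
    have h1 : F u ≤ F x := hFm hu.2
    have h2 : F y ≤ F v := hFm hv.1
    have h3 : G u ≤ G x := hGm hu.2
    have h4 : G y ≤ G v := hGm hv.1
    have : 0 < (F u - F v) * (G u - G v) := mul_pos_of_neg_of_neg (by linarith) (by linarith)
    exact ne_of_gt this
  have hRpos : (μ01.prod μ01) (Set.Ioc 0 x ×ˢ Set.Ico y 1) = 0 :=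
    measure_mono_null hsub hnull
  rw [Measure.prod_prod] at hRpos
  have e1 : μ01 (Set.Ioc 0 x) = ENNReal.ofReal x := by
    rw [μ01, Measure.restrict_apply measurableSet_Ioc,
      Set.inter_eq_left.mpr (Set.Ioc_subset_Ioc le_rfl (by linarith))]
    simp
  have e2 : μ01 (Set.Ico y 1) = ENNReal.ofReal (1 - y) := by
    rw [μ01, Measure.restrict_apply measurableSet_Ico,
      Set.inter_eq_left.mpr (by intro z hz; exact ⟨by linarith [hz.1], hz.2.le⟩)]
    simp [Real.volume_Ico]
  rw [e1, e2] at hRpos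
  rcases mul_eq_zero.mp hRpos with h | h
  · rw [ENNReal.ofReal_eq_zero] at h; linarith
  · rw [ENNReal.ofReal_eq_zero] at h; linarith

end Cheb
section Chunk3
open MeasureTheory Set

lemma int_on {F : ℝ → ℝ} (h : Integrable F μ01) {s : Set ℝ} (hs : s ⊆ Set.Ioc 0 1) :
    IntegrableOn F s volume :=
  MeasureTheory.IntegrableOn.mono_set (by exact h) hs

lemma ae_ne_μ01 (c : ℝ) : ∀ᵐ x ∂μ01, x ≠ c := by
  rw [ae_iff]
  have h1 : {x : ℝ | ¬ x ≠ c} = {c} := by ext z; simp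
  rw [h1, μ01, Measure.restrict_apply (measurableSet_singleton c)]
  exact measure_mono_null inter_subset_left Real.volume_singleton

lemma dichotomy {F G : ℝ → ℝ} (hFm : Monotone F) (hGm : Monotone G)
    (h : ∀ x y : ℝ, 0 < x → x < y → y < 1 → F x = F y ∨ G x = G y) :
    (∀ x ∈ Set.Ioo (0:ℝ) 1, ∀ y ∈ Set.Ioo (0:ℝ) 1, F x = F y) ∨
    (∀ x ∈ Set.Ioo (0:ℝ) 1, ∀ y ∈ Set.Ioo (0:ℝ) 1, G x = G y) := by
  by_contra hcon
  push_neg at hcon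
  obtain ⟨⟨a, ha, b, hb, hab⟩, ⟨c, hc, d, hd, hcd⟩⟩ := hcon
  have hF' : ∃ a' b', a' ∈ Set.Ioo (0:ℝ) 1 ∧ b' ∈ Set.Ioo (0:ℝ) 1 ∧ a' < b' ∧ F a' < F b' := by
    rcases lt_trichotomy a b with h' | h' | h'
    · exact ⟨a, b, ha, hb, h', lt_of_le_of_ne (hFm h'.le) hab⟩
    · exact absurd (congrArg F h') hab
    · exact ⟨b, a, hb, ha, h', lt_of_le_of_ne (hFm h'.le) (Ne.symm hab)⟩
  have hG' : ∃ c' d', c' ∈ Set.Ioo (0:ℝ) 1 ∧ d' ∈ Set.Ioo (0:ℝ) 1 ∧ c' < d' ∧ G c' < G d' := by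
    rcases lt_trichotomy c d with h' | h' | h'
    · exact ⟨c, d, hc, hd, h', lt_of_le_of_ne (hGm h'.le) hcd⟩
    · exact absurd (congrArg G h') hcd
    · exact ⟨d, c, hd, hc, h', lt_of_le_of_ne (hGm h'.le) (Ne.symm hcd)⟩
  obtain ⟨a', b', ha', hb', hab', hFab⟩ := hF'
  obtain ⟨c', d', hc', hd', hcd', hGcd⟩ := hG'
  have hx : (0:ℝ) < min a' c' := lt_min ha'.1 hc'.1
  have hy : max b' d' < 1 := max_lt hb'.2 hd'.2
  have hxy : min a' c' < max b' d' := lt_of_le_of_lt (min_le_left _ _)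
    (lt_of_lt_of_le hab' (le_max_left _ _))
  rcases h _ _ hx hxy hy with hFe | hGe
  · have h1 : F (min a' c') ≤ F a' := hFm (min_le_left _ _)
    have h2 : F b' ≤ F (max b' d') := hFm (le_max_left _ _)
    linarith [hFe.le, hFe.ge]
  · have h1 : G (min a' c') ≤ G c' := hGm (min_le_right _ _)
    have h2 : G d' ≤ G (max b' d') := hGm (le_max_right _ _)
    linarith [hGe.le, hGe.ge]

lemma const_val {F : ℝ → ℝ} {t : ℝ}
    (hc : ∀ x ∈ Set.Ioo (0:ℝ) 1, ∀ y ∈ Set.Ioo (0:ℝ) 1, F x = F y)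
    (hFi : ∫ x, F x ∂μ01 = 1 - t) : ∀ x ∈ Set.Ioo (0:ℝ) 1, F x = 1 - t := by
  have hhalf : (1/2 : ℝ) ∈ Set.Ioo (0:ℝ) 1 := by norm_num
  have key : F (1/2) = 1 - t := by
    have : ∫ x, F x ∂μ01 = ∫ _x, F (1/2) ∂μ01 := by
      refine integral_congr_ae ?_
      filter_upwards [ae_restrict_mem measurableSet_Ioc, ae_ne_μ01 1] with x hx hx1
      exact hc x ⟨hx.1, lt_of_le_of_ne hx.2 hx1⟩ (1/2) hhalf
    rw [this, integral_const] at hFi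
    simpa using hFi
  exact fun x hx => (hc x hx (1/2) hhalf).trans key

lemma split_integral {F : ℝ → ℝ} (hFint : Integrable F μ01) {x : ℝ} (hx0 : 0 < x) (hx1 : x < 1) :
    ∫ y, F y ∂μ01 = (∫ y in Set.Ioc 0 x, F y) + ∫ y in Set.Ioc x 1, F y := by
  have hd : Disjoint (Set.Ioc (0:ℝ) x) (Set.Ioc x 1) := Set.Ioc_disjoint_Ioc_of_le le_rfl
  have hu : Set.Ioc (0:ℝ) x ∪ Set.Ioc x 1 = Set.Ioc 0 1 := Set.Ioc_union_Ioc_eq_Ioc hx0.le hx1.le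
  have h1 : IntegrableOn F (Set.Ioc 0 x) volume := int_on hFint (Set.Ioc_subset_Ioc le_rfl hx1.le)
  have h2 : IntegrableOn F (Set.Ioc x 1) volume := int_on hFint (Set.Ioc_subset_Ioc hx0.le le_rfl)
  have := setIntegral_union hd measurableSet_Ioc h1 h2 (μ := volume) (f := F)
  rw [hu] at this
  exact this

/-- Pointwise dichotomy for a monotone cdf satisfying the a.e. `min = mul` identity. -/
lemma cdf_zero_one {G : ℝ → ℝ} {t : ℝ} (ht0 : 0 < t) (ht1 : t < 1)
    (hGm : Monotone G) (hG0 : ∀ x, 0 ≤ G x) (hG1 : ∀ x, G x ≤ 1)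
    (hGint : Integrable G μ01) (hGi : ∫ x, G x ∂μ01 = 1 - t)
    (hmin : ∀ᵐ x ∂μ01, min (G x) (1 - t) = G x * (1 - t)) :
    ∀ x ∈ Set.Ioo (0:ℝ) 1, (x < t → G x = 0) ∧ (t < x → G x = 1) := by
  have hae01 : ∀ᵐ x ∂μ01, G x = 0 ∨ G x = 1 := by
    filter_upwards [hmin] with x hx
    rcases le_total (G x) (1 - t) with h | h
    · rw [min_eq_left h] at hx; left; nlinarith
    · rw [min_eq_right h] at hx; right; nlinarith
  intro x hx
  constructor
  · intro hxt
    by_contra hne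
    have hGpos : 0 < G x := lt_of_le_of_ne (hG0 x) (Ne.symm hne)
    -- a.e. y > x implies G y = 1; so ∫ G ≥ 1 - x > 1 - t, contradiction
    have hone : ∀ᵐ y ∂(volume.restrict (Set.Ioc x 1)), G y = 1 := by
      have hsub : Set.Ioc x 1 ⊆ Set.Ioc 0 1 := Set.Ioc_subset_Ioc hx.1.le le_rfl
      filter_upwards [ae_restrict_of_ae_restrict_of_subset hsub hae01,
        ae_restrict_mem measurableSet_Ioc] with y hy hymem
      rcases hy with h0 | h1
      · exact absurd h0 (by have := hGm hymem.1.le; nlinarith)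
      · exact h1
    have hval : ∫ y in Set.Ioc x 1, G y = 1 - x := by
      rw [integral_congr_ae (hone.mono fun y hy => by rw [hy])]
      simp [Real.volume_Ioc, hx.2.le]
    have hmono : ∫ y in Set.Ioc x 1, G y ≤ ∫ y, G y ∂μ01 := by
      refine setIntegral_mono_set hGint (ae_of_all _ hG0) ?_
      exact Filter.Eventually.of_forall (Set.Ioc_subset_Ioc hx.1.le le_rfl)
    rw [hval, hGi] at hmono
    linarith
  · intro htx
    by_contra hne
    have hGlt : G x < 1 := lt_of_le_of_ne (hG1 x) hne
    have hzero : ∀ᵐ y ∂(volume.restrict (Set.Ioc 0 x)), G y = 0 := by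
      have hsub : Set.Ioc 0 x ⊆ Set.Ioc 0 1 := Set.Ioc_subset_Ioc le_rfl hx.2.le
      filter_upwards [ae_restrict_of_ae_restrict_of_subset hsub hae01,
        ae_restrict_mem measurableSet_Ioc] with y hy hymem
      rcases hy with h0 | h1
      · exact h0
      · exact absurd h1 (by have := hGm hymem.2; nlinarith)
    have hv1 : ∫ y in Set.Ioc 0 x, G y = 0 := by
      rw [integral_congr_ae (hzero.mono fun y hy => by rw [hy])]
      simp
    have hv2 : ∫ y in Set.Ioc x 1, G y ≤ 1 - x := by
      have : ∫ y in Set.Ioc x 1, G y ≤ ∫ _y in Set.Ioc x 1, (1:ℝ) := by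
        refine setIntegral_mono_on ?_ (integrableOn_const ?_) measurableSet_Ioc
          (fun y _ => hG1 y)
        · exact int_on hGint (Set.Ioc_subset_Ioc hx.1.le le_rfl)
        · rw [Real.volume_Ioc]; exact ENNReal.ofReal_ne_top
      simpa [Real.volume_Ioc, hx.2.le] using this
    have := split_integral hGint hx.1 hx.2
    rw [hGi, hv1, zero_add] at this
    linarith

lemma forall_one {G : ℝ → ℝ} (hGm : Monotone G) (hG1 : ∀ x, G x ≤ 1)
    (hGint : Integrable G μ01) (hGi : ∫ x, G x ∂μ01 = 1) :
    ∀ x ∈ Set.Ioo (0:ℝ) 1, G x = 1 := by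
  intro x hx
  by_contra hne
  have hGlt : G x < 1 := lt_of_le_of_ne (hG1 x) hne
  have hv1 : ∫ y in Set.Ioc 0 x, G y ≤ x * G x := by
    have : ∫ y in Set.Ioc 0 x, G y ≤ ∫ _y in Set.Ioc 0 x, G x := by
      refine setIntegral_mono_on (int_on hGint (Set.Ioc_subset_Ioc le_rfl hx.2.le))
        (integrableOn_const ?_)
        measurableSet_Ioc (fun y hy => hGm hy.2)
      rw [Real.volume_Ioc]; exact ENNReal.ofReal_ne_top
    simpa [Real.volume_Ioc, hx.1.le] using this
  have hv2 : ∫ y in Set.Ioc x 1, G y ≤ 1 - x := by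
    have : ∫ y in Set.Ioc x 1, G y ≤ ∫ _y in Set.Ioc x 1, (1:ℝ) := by
      refine setIntegral_mono_on (int_on hGint (Set.Ioc_subset_Ioc hx.1.le le_rfl))
        (integrableOn_const ?_)
        measurableSet_Ioc (fun y _ => hG1 y)
      rw [Real.volume_Ioc]; exact ENNReal.ofReal_ne_top
    simpa [Real.volume_Ioc, hx.2.le] using this
  have := split_integral hGint hx.1 hx.2
  rw [hGi] at this
  nlinarith [hx.1, hGlt]

lemma forall_zero {G : ℝ → ℝ} (hGm : Monotone G) (hG0 : ∀ x, 0 ≤ G x)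
    (hGint : Integrable G μ01) (hGi : ∫ x, G x ∂μ01 = 0) :
    ∀ x ∈ Set.Ioo (0:ℝ) 1, G x = 0 := by
  intro x hx
  by_contra hne
  have hGpos : 0 < G x := lt_of_le_of_ne (hG0 x) (Ne.symm hne)
  have hv1 : 0 ≤ ∫ y in Set.Ioc 0 x, G y := setIntegral_nonneg measurableSet_Ioc fun y _ => hG0 y
  have hv2 : (1 - x) * G x ≤ ∫ y in Set.Ioc x 1, G y := by
    have : ∫ _y in Set.Ioc x 1, G x ≤ ∫ y in Set.Ioc x 1, G y := by
      refine setIntegral_mono_on (integrableOn_const ?_)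
        (int_on hGint (Set.Ioc_subset_Ioc hx.1.le le_rfl))
        measurableSet_Ioc (fun y hy => hGm hy.1.le)
      rw [Real.volume_Ioc]; exact ENNReal.ofReal_ne_top
    simpa [Real.volume_Ioc, hx.2.le] using this
  have := split_integral hGint hx.1 hx.2
  rw [hGi] at this
  nlinarith [hx.2]

end Chunk3
section Chunk4
open MeasureTheory Set

lemma toReal_measure {μ : Measure ℝ} [IsFiniteMeasure μ] {s : Set ℝ} {r : ℝ}
    (h : (μ s).toReal = r) : μ s = ENNReal.ofReal r := by
  rw [← h, ENNReal.ofReal_toReal (measure_ne_top μ s)]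

lemma measure_Icc_right_lim (μ : Measure ℝ) [IsFiniteMeasure μ] {c : ENNReal} {x b : ℝ}
    (hxb : x < b) (h : ∀ y, x < y → y < b → μ (Set.Icc 0 y) = c) :
    μ (Set.Icc 0 x) = c := by
  have hseq : Set.Icc (0:ℝ) x = ⋂ n : ℕ, Set.Icc 0 (x + (b - x)/(n + 2)) := by
    ext z
    simp only [Set.mem_Icc, Set.mem_iInter]
    constructor
    · intro hz n
      refine ⟨hz.1, le_trans hz.2 (le_add_of_nonneg_right (div_nonneg (by linarith) (by positivity)))⟩
    · intro hz
      refine ⟨(hz 0).1, ?_⟩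
      by_contra hzx
      push_neg at hzx
      obtain ⟨n, hn⟩ := exists_nat_gt ((b - x)/(z - x))
      have h1 : b - x < n * (z - x) := (div_lt_iff₀ (by linarith)).mp hn
      have h2 : (b - x)/(n + 2) < z - x := by
        rw [div_lt_iff₀ (by positivity)]
        nlinarith [sub_pos.mpr hzx]
      have := (hz n).2
      linarith
  have hanti : Antitone (fun n : ℕ => Set.Icc (0:ℝ) (x + (b - x)/(n + 2))) := by
    intro n m hnm
    refine Set.Icc_subset_Icc le_rfl (add_le_add le_rfl ?_)
    refine div_le_div_of_nonneg_left (by linarith) (by positivity) (by exact_mod_cast by omega)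
  rw [hseq, hanti.measure_iInter (fun n => measurableSet_Icc.nullMeasurableSet)
    ⟨0, measure_ne_top μ _⟩]
  have hval : ∀ n : ℕ, μ (Set.Icc 0 (x + (b - x)/(n + 2))) = c := by
    intro n
    refine h _ (lt_add_of_pos_right x (div_pos (by linarith) (by positivity))) ?_
    have : (b - x)/(n + 2) < b - x := by
      rw [div_lt_iff₀ (by positivity)]
      nlinarith [sub_pos.mpr hxb]
    linarith
  simp [hval]

lemma eq_dirac {μ : Measure ℝ} (h : μ ∈ P01) {s : ℝ} (hs0 : 0 ≤ s) (hs1 : s ≤ 1)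
    (h0 : ∀ x, 0 < x → x < s → cdfI μ x = 0) (h1 : ∀ x, s < x → x < 1 → cdfI μ x = 1) :
    μ = Measure.dirac s := by
  haveI := h.1
  refine Measure.ext_of_Iic μ (Measure.dirac s) (fun a => ?_)
  rw [Measure.dirac_apply' _ measurableSet_Iic]
  rcases lt_or_ge a 0 with ha | ha
  · have hμ : μ (Set.Iic a) = 0 :=
      measure_mono_null (fun z hz => by simp only [Set.mem_compl_iff, Set.mem_Icc, Set.mem_Iic] at *; intro h'; linarith)
        (compl_null h)
    rw [hμ, Set.indicator_of_notMem (by simp only [Set.mem_Iic]; intro h'; linarith)]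
  · rcases lt_or_ge a s with has | has
    · rw [measure_Iic h ha]
      have hz : μ (Set.Icc 0 a) = 0 := by
        refine measure_Icc_right_lim μ has (fun y hy1 hy2 => ?_)
        have := h0 y (lt_of_le_of_lt ha hy1) hy2
        simpa using toReal_measure this
      rw [hz, Set.indicator_of_notMem (by simp only [Set.mem_Iic]; intro h'; linarith)]
    · rw [Set.indicator_of_mem (by simpa using has) (1 : ℝ → ENNReal)]
      rcases lt_or_ge a 1 with ha1 | ha1
      · rw [measure_Iic h ha]
        have hone : μ (Set.Icc 0 a) = 1 := by
          have := measure_Icc_right_lim μ (b := 1) (c := ENNReal.ofReal 1) ha1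
            (fun y hy1 hy2 => toReal_measure (h1 y (lt_of_le_of_lt has hy1) hy2))
          simpa using this
        rw [hone]; simp
      · have : μ (Set.Iic a) = 1 := by
          refine le_antisymm prob_le_one ?_
          rw [← h.2]
          exact measure_mono (fun z hz => le_trans hz.2 ha1)
        rw [this]; simp

lemma eq_combo {μ : Measure ℝ} (h : μ ∈ P01) {t : ℝ} (ht0 : 0 ≤ t) (ht1 : t ≤ 1)
    (hc : ∀ x, 0 < x → x < 1 → cdfI μ x = 1 - t) :
    μ = ENNReal.ofReal (1 - t) • Measure.dirac 0 + ENNReal.ofReal t • Measure.dirac 1 := by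
  haveI := h.1
  refine Measure.ext_of_Iic _ _ (fun a => ?_)
  rw [Measure.coe_add, Pi.add_apply, Measure.smul_apply, Measure.smul_apply,
    Measure.dirac_apply' _ measurableSet_Iic, Measure.dirac_apply' _ measurableSet_Iic,
    smul_eq_mul, smul_eq_mul]
  rcases lt_or_ge a 0 with ha | ha
  · have hμ : μ (Set.Iic a) = 0 :=
      measure_mono_null (fun z hz => by simp only [Set.mem_compl_iff, Set.mem_Icc, Set.mem_Iic] at *; intro h'; linarith)
        (compl_null h)
    rw [hμ, Set.indicator_of_notMem (by simp only [Set.mem_Iic]; linarith),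
      Set.indicator_of_notMem (by simp only [Set.mem_Iic]; linarith)]
    simp
  · rcases lt_or_ge a 1 with ha1 | ha1
    · rw [measure_Iic h ha]
      have hval : μ (Set.Icc 0 a) = ENNReal.ofReal (1 - t) := by
        refine measure_Icc_right_lim μ ha1 (fun y hy1 hy2 => ?_)
        exact toReal_measure (hc y (lt_of_le_of_lt ha hy1) hy2)
      rw [hval, Set.indicator_of_mem (by simpa using ha) (1 : ℝ → ENNReal),
        Set.indicator_of_notMem (by simp only [Set.mem_Iic]; linarith)]
      simp
    · have hμ : μ (Set.Iic a) = 1 := by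
        refine le_antisymm prob_le_one ?_
        rw [← h.2]
        exact measure_mono (fun z hz => le_trans hz.2 ha1)
      rw [hμ, Set.indicator_of_mem (by simpa using ha) (1 : ℝ → ENNReal),
        Set.indicator_of_mem (by simpa using ha1) (1 : ℝ → ENNReal)]
      simp only [Pi.one_apply, mul_one]
      rw [← ENNReal.ofReal_add (by linarith) ht0]
      norm_num

lemma combo_mem_P01 {t : ℝ} (ht0 : 0 ≤ t) (ht1 : t ≤ 1) :
    (ENNReal.ofReal (1 - t) • Measure.dirac (0:ℝ) + ENNReal.ofReal t • Measure.dirac (1:ℝ)) ∈ P01 := by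
  have hsum : ENNReal.ofReal (1 - t) + ENNReal.ofReal t = 1 := by
    rw [← ENNReal.ofReal_add (by linarith) ht0]; norm_num
  constructor
  · constructor
    rw [Measure.coe_add, Pi.add_apply, Measure.smul_apply, Measure.smul_apply]
    simp [hsum]
  · rw [Measure.coe_add, Pi.add_apply, Measure.smul_apply, Measure.smul_apply,
      Measure.dirac_apply' _ measurableSet_Icc, Measure.dirac_apply' _ measurableSet_Icc,
      Set.indicator_of_mem (by constructor <;> norm_num) (1 : ℝ → ENNReal),
      Set.indicator_of_mem (by constructor <;> norm_num) (1 : ℝ → ENNReal)]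
    simpa using hsum

lemma cdfI_combo {t x : ℝ} (ht0 : 0 ≤ t) (ht1 : t ≤ 1) (hx0 : 0 ≤ x) (hx1 : x < 1) :
    cdfI (ENNReal.ofReal (1 - t) • Measure.dirac (0:ℝ) + ENNReal.ofReal t • Measure.dirac (1:ℝ)) x
      = 1 - t := by
  rw [cdfI, Measure.coe_add, Pi.add_apply, Measure.smul_apply, Measure.smul_apply,
    Measure.dirac_apply' _ measurableSet_Icc, Measure.dirac_apply' _ measurableSet_Icc,
    Set.indicator_of_mem (Set.mem_Icc.mpr ⟨le_rfl, hx0⟩) (1 : ℝ → ENNReal),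
    Set.indicator_of_notMem (by simp only [Set.mem_Icc]; intro h'; linarith)]
  simp [ENNReal.toReal_ofReal (by linarith : (0:ℝ) ≤ 1 - t)]

lemma cdfI_dirac_pt {t x : ℝ} (ht0 : 0 ≤ t) :
    cdfI (Measure.dirac t) x = if t ≤ x then 1 else 0 := by
  rw [cdfI, Measure.dirac_apply' _ measurableSet_Icc]
  by_cases h : t ≤ x
  · rw [Set.indicator_of_mem (Set.mem_Icc.mpr ⟨ht0, h⟩) (1 : ℝ → ENNReal)]; simp [h]
  · rw [Set.indicator_of_notMem (fun hm => h hm.2)]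
    simp [h]

lemma dW1I_comm (μ ν : Measure ℝ) : dW1I μ ν = dW1I ν μ := by
  rw [dW1I, dW1I]
  congr 1
  funext x
  rw [abs_sub_comm]

end Chunk4
section Chunk5
open MeasureTheory Set

lemma ae_ne_vol (c : ℝ) : ∀ᵐ x : ℝ, x ≠ c := by
  have h1 : {x : ℝ | ¬ x ≠ c} = {c} := by ext z; simp
  rw [ae_iff, h1]
  exact Real.volume_singleton

lemma dW1I_combo_dirac {t : ℝ} (ht0 : 0 ≤ t) (ht1 : t ≤ 1) :
    dW1I (ENNReal.ofReal (1 - t) • Measure.dirac (0:ℝ) + ENNReal.ofReal t • Measure.dirac (1:ℝ))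
      (Measure.dirac t) = 2 * t * (1 - t) := by
  set ν := ENNReal.ofReal (1 - t) • Measure.dirac (0:ℝ) + ENNReal.ofReal t • Measure.dirac (1:ℝ)
    with hν
  haveI : IsProbabilityMeasure ν := (combo_mem_P01 ht0 ht1).1
  have hint : IntervalIntegrable (fun x => |cdfI ν x - cdfI (Measure.dirac t) x|) volume 0 1 :=
    ((cdfI_mono ν).intervalIntegrable.sub (cdfI_mono (Measure.dirac t)).intervalIntegrable).abs
  have hsub1 : Set.uIcc (0:ℝ) t ⊆ Set.uIcc (0:ℝ) 1 := by
    rw [Set.uIcc_of_le ht0, Set.uIcc_of_le zero_le_one]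
    exact Set.Icc_subset_Icc le_rfl ht1
  have hsub2 : Set.uIcc t (1:ℝ) ⊆ Set.uIcc (0:ℝ) 1 := by
    rw [Set.uIcc_of_le ht1, Set.uIcc_of_le zero_le_one]
    exact Set.Icc_subset_Icc ht0 le_rfl
  rw [dW1I, ← intervalIntegral.integral_add_adjacent_intervals
    (hint.mono_set hsub1) (hint.mono_set hsub2)]
  have h1 : ∫ x in (0:ℝ)..t, |cdfI ν x - cdfI (Measure.dirac t) x| = t * (1 - t) := by
    rw [intervalIntegral.integral_congr_ae (g := fun _ => 1 - t) ?_,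
      intervalIntegral.integral_const]
    · simp
    · filter_upwards [ae_ne_vol t] with x hxt hx
      rw [Set.uIoc_of_le ht0] at hx
      have hxlt : x < t := lt_of_le_of_ne hx.2 hxt
      rw [cdfI_combo ht0 ht1 hx.1.le (lt_of_lt_of_le hxlt ht1), cdfI_dirac_pt ht0,
        if_neg (not_le.mpr hxlt)]
      rw [sub_zero, abs_of_nonneg (by linarith)]
  have h2 : ∫ x in t..(1:ℝ), |cdfI ν x - cdfI (Measure.dirac t) x| = (1 - t) * t := by
    rw [intervalIntegral.integral_congr_ae (g := fun _ => t) ?_,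
      intervalIntegral.integral_const]
    · simp
    · filter_upwards [ae_ne_vol 1] with x hx1 hx
      rw [Set.uIoc_of_le ht1] at hx
      have hxlt : x < 1 := lt_of_le_of_ne hx.2 hx1
      rw [cdfI_combo ht0 ht1 (le_trans ht0 hx.1.le) hxlt, cdfI_dirac_pt ht0,
        if_pos hx.1.le]
      rw [show (1 - t - 1 : ℝ) = -t by ring, abs_neg, abs_of_nonneg ht0]
  rw [h1, h2]; ring

end Chunk5
end SliceAux

open SliceAux

/-- The `t`-slice `S_t = {μ : d(δ₀,μ) = t}` of `W₁([0,1])` has diameter `2t(1-t)`,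
attained exactly at the pair `{(1-t)δ₀ + tδ₁, δ_t}`. -/
theorem slice_diameter (t : ℝ) (ht : t ∈ Set.Icc (0:ℝ) 1)
    (ρ : Measure ℝ) (hρ : ρ ∈ P01) (σ : Measure ℝ) (hσ : σ ∈ P01)
    (hρt : dW1I (Measure.dirac 0) ρ = t) (hσt : dW1I (Measure.dirac 0) σ = t) :
    dW1I ρ σ ≤ 2 * t * (1 - t) ∧
    (dW1I ρ σ = 2 * t * (1 - t) ↔
      (ρ = ENNReal.ofReal (1 - t) • Measure.dirac (0:ℝ) + ENNReal.ofReal t • Measure.dirac (1:ℝ)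
          ∧ σ = Measure.dirac t) ∨
      (ρ = Measure.dirac t ∧
        σ = ENNReal.ofReal (1 - t) • Measure.dirac (0:ℝ) + ENNReal.ofReal t • Measure.dirac (1:ℝ))) := by
  obtain ⟨ht0, ht1⟩ := ht
  haveI hρp := hρ.1
  haveI hσp := hσ.1
  have hFm : Monotone (cdfI ρ) := cdfI_mono ρ
  have hGm : Monotone (cdfI σ) := cdfI_mono σ
  have hFb : ∀ x, |cdfI ρ x| ≤ 1 := fun x =>
    abs_le.2 ⟨by linarith [cdfI_nonneg ρ x], cdfI_le_one hρ x⟩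
  have hGb : ∀ x, |cdfI σ x| ≤ 1 := fun x =>
    abs_le.2 ⟨by linarith [cdfI_nonneg σ x], cdfI_le_one hσ x⟩
  have hFi : ∫ x, cdfI ρ x ∂μ01 = 1 - t := int_cdfI hρ hρt
  have hGi : ∫ x, cdfI σ x ∂μ01 = 1 - t := int_cdfI hσ hσt
  have iF : Integrable (cdfI ρ) μ01 := cdfI_integrable hρ
  have iG : Integrable (cdfI σ) μ01 := cdfI_integrable hσ
  have iFG : Integrable (fun x => cdfI ρ x * cdfI σ x) μ01 :=
    integrable_of_bounded (hFm.measurable.mul hGm.measurable).aestronglyMeasurable (C := 1)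
      (fun x => by rw [abs_mul]; exact mul_le_one₀ (hFb x) (abs_nonneg _) (hGb x))
  have imin : Integrable (fun x => min (cdfI ρ x) (cdfI σ x)) μ01 := by
    refine integrable_of_bounded (hFm.measurable.min hGm.measurable).aestronglyMeasurable
      (C := 1) (fun x => ?_)
    have h1 := abs_le.1 (hFb x)
    have h2 := abs_le.1 (hGb x)
    exact abs_le.2 ⟨le_min h1.1 h2.1, min_le_of_left_le h1.2⟩
  have hle_minFG : ∀ x, cdfI ρ x * cdfI σ x ≤ min (cdfI ρ x) (cdfI σ x) := fun x => by
    have h1 := cdfI_nonneg ρ x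
    have h2 := cdfI_nonneg σ x
    have h3 := cdfI_le_one hρ x
    have h4 := cdfI_le_one hσ x
    rcases le_total (cdfI ρ x) (cdfI σ x) with h | h
    · rw [min_eq_left h]; nlinarith
    · rw [min_eq_right h]; nlinarith
  have hintmono : ∫ x, cdfI ρ x * cdfI σ x ∂μ01 ≤ ∫ x, min (cdfI ρ x) (cdfI σ x) ∂μ01 :=
    integral_mono iFG imin hle_minFG
  have hcheb : (1 - t) * (1 - t) ≤ ∫ x, cdfI ρ x * cdfI σ x ∂μ01 := by
    have := cheb_le hFm hGm hFb hGb
    rw [hFi, hGi] at this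
    exact this
  have habs : (fun x => |cdfI ρ x - cdfI σ x|)
      = fun x => cdfI ρ x + cdfI σ x - 2 * min (cdfI ρ x) (cdfI σ x) := by
    funext x
    rcases le_total (cdfI ρ x) (cdfI σ x) with h | h
    · rw [min_eq_left h, abs_of_nonpos (by linarith)]; ring
    · rw [min_eq_right h, abs_of_nonneg (by linarith)]; ring
  have hd : dW1I ρ σ = (1 - t) + (1 - t) - 2 * ∫ x, min (cdfI ρ x) (cdfI σ x) ∂μ01 := by
    have iadd : Integrable (fun x => cdfI ρ x + cdfI σ x) μ01 := iF.add iG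
    have i2m : Integrable (fun x => 2 * min (cdfI ρ x) (cdfI σ x)) μ01 := imin.const_mul 2
    rw [dW1I_eq, habs, integral_sub iadd i2m, integral_add iF iG, integral_const_mul, hFi, hGi]
  have hring : 2*(1-t) - 2*((1-t)*(1-t)) = 2*t*(1-t) := by ring
  refine ⟨by linarith, ⟨?_, ?_⟩⟩
  · -- equality implies the pair is extremal
    intro heq
    rcases eq_or_lt_of_le ht0 with h0 | h0
    · -- t = 0
      subst h0
      have hcombo : (ENNReal.ofReal (1 - 0) • Measure.dirac (0:ℝ)
          + ENNReal.ofReal 0 • Measure.dirac (1:ℝ)) = Measure.dirac 0 := by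
        simp
      have hρc : ∀ x : ℝ, 0 < x → x < 1 → cdfI ρ x = 1 - 0 := fun x hx1 hx2 => by
        simpa using forall_one hFm (cdfI_le_one hρ) iF (by simpa using hFi) x ⟨hx1, hx2⟩
      have hσc : ∀ x : ℝ, 0 < x → x < 1 → cdfI σ x = 1 - 0 := fun x hx1 hx2 => by
        simpa using forall_one hGm (cdfI_le_one hσ) iG (by simpa using hGi) x ⟨hx1, hx2⟩
      exact Or.inl ⟨eq_combo hρ le_rfl zero_le_one hρc,
        (eq_combo hσ le_rfl zero_le_one hσc).trans hcombo⟩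
    rcases eq_or_lt_of_le ht1 with h1 | h1
    · -- t = 1
      subst h1
      have hcombo : (ENNReal.ofReal (1 - 1) • Measure.dirac (0:ℝ)
          + ENNReal.ofReal 1 • Measure.dirac (1:ℝ)) = Measure.dirac 1 := by
        simp
      have hρc : ∀ x : ℝ, 0 < x → x < 1 → cdfI ρ x = 1 - 1 := fun x hx1 hx2 => by
        simpa using forall_zero hFm (cdfI_nonneg ρ) iF (by simpa using hFi) x ⟨hx1, hx2⟩
      have hσc : ∀ x : ℝ, 0 < x → x < 1 → cdfI σ x = 1 - 1 := fun x hx1 hx2 => by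
        simpa using forall_zero hGm (cdfI_nonneg σ) iG (by simpa using hGi) x ⟨hx1, hx2⟩
      exact Or.inl ⟨eq_combo hρ zero_le_one le_rfl hρc,
        (eq_combo hσ zero_le_one le_rfl hσc).trans hcombo⟩
    -- 0 < t < 1
    have hminval : ∫ x, min (cdfI ρ x) (cdfI σ x) ∂μ01 = (1 - t) * (1 - t) := by
      linarith
    have hFGval : ∫ x, cdfI ρ x * cdfI σ x ∂μ01 = (1 - t) * (1 - t) :=
      le_antisymm (hminval ▸ hintmono) hcheb
    have hminae : ∀ᵐ x ∂μ01, min (cdfI ρ x) (cdfI σ x) = cdfI ρ x * cdfI σ x := by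
      have hz : ∫ x, (min (cdfI ρ x) (cdfI σ x) - cdfI ρ x * cdfI σ x) ∂μ01 = 0 := by
        rw [integral_sub imin iFG, hminval, hFGval]; ring
      have hae := (integral_eq_zero_iff_of_nonneg
        (fun x => sub_nonneg.2 (hle_minFG x)) (imin.sub iFG)).mp hz
      filter_upwards [hae] with x hx
      simp only [Pi.zero_apply] at hx
      exact sub_eq_zero.mp hx
    have hnc := cheb_eq hFm hGm hFb hGb (by rw [hFGval, hFi, hGi])
    rcases dichotomy hFm hGm hnc with hc | hc
    · -- cdfI ρ constant on (0,1)
      have hFval : ∀ x ∈ Set.Ioo (0:ℝ) 1, cdfI ρ x = 1 - t := const_val hc hFi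
      refine Or.inl ⟨eq_combo hρ ht0 ht1 (fun x hx1 hx2 => hFval x ⟨hx1, hx2⟩), ?_⟩
      have hminG : ∀ᵐ x ∂μ01, min (cdfI σ x) (1 - t) = cdfI σ x * (1 - t) := by
        filter_upwards [hminae, ae_restrict_mem measurableSet_Ioc, ae_ne_μ01 1]
          with x hx hmem hne
        have hxmem : x ∈ Set.Ioo (0:ℝ) 1 := ⟨hmem.1, lt_of_le_of_ne hmem.2 hne⟩
        rw [hFval x hxmem] at hx
        rw [min_comm, mul_comm]
        exact hx
      have hG01 := cdf_zero_one h0 h1 hGm (cdfI_nonneg σ) (cdfI_le_one hσ) iG hGi hminG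
      exact eq_dirac hσ ht0 ht1
        (fun x hx1 hx2 => (hG01 x ⟨hx1, lt_of_lt_of_le hx2 ht1⟩).1 hx2)
        (fun x hx1 hx2 => (hG01 x ⟨lt_trans h0 hx1, hx2⟩).2 hx1)
    · -- cdfI σ constant on (0,1)
      have hGval : ∀ x ∈ Set.Ioo (0:ℝ) 1, cdfI σ x = 1 - t := const_val hc hGi
      refine Or.inr ⟨?_, eq_combo hσ ht0 ht1 (fun x hx1 hx2 => hGval x ⟨hx1, hx2⟩)⟩
      have hminF : ∀ᵐ x ∂μ01, min (cdfI ρ x) (1 - t) = cdfI ρ x * (1 - t) := by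
        filter_upwards [hminae, ae_restrict_mem measurableSet_Ioc, ae_ne_μ01 1]
          with x hx hmem hne
        have hxmem : x ∈ Set.Ioo (0:ℝ) 1 := ⟨hmem.1, lt_of_le_of_ne hmem.2 hne⟩
        rw [hGval x hxmem] at hx
        exact hx
      have hF01 := cdf_zero_one h0 h1 hFm (cdfI_nonneg ρ) (cdfI_le_one hρ) iF hFi hminF
      exact eq_dirac hρ ht0 ht1
        (fun x hx1 hx2 => (hF01 x ⟨hx1, lt_of_lt_of_le hx2 ht1⟩).1 hx2)
        (fun x hx1 hx2 => (hF01 x ⟨lt_trans h0 hx1, hx2⟩).2 hx1)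
  · rintro (⟨h1, h2⟩ | ⟨h1, h2⟩) <;> rw [h1, h2]
    · exact dW1I_combo_dirac ht0 ht1
    · rw [dW1I_comm]
      exact dW1I_combo_dirac ht0 ht1
end
end

section
/- For every μ ∈ W₁([0,1]) and t ∈ [0,1], d_{W₁}(μ, δ_t) = ∫₀ᵗ F_μ(x) dx + ∫ₜ¹ (1 − F_μ(x)) dx. Consequently, for every t ∈ [0,1) the right derivative of s ↦ d_{W₁}(μ, δ_s) at t equals 2F_μ(t) − 1, and hence a measure μ ∈ W₁([0,1]) is uniquely determined by its distances from all Dirac masses. -/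
open MeasureTheory Set Filter
open scoped Topology

noncomputable section

/- ### Auxiliary lemmas -/

lemma cdfI_mono (μ : Measure ℝ) [IsFiniteMeasure μ] : Monotone (cdfI μ) :=
  fun _ _ hab => ENNReal.toReal_mono (measure_ne_top _ _)
    (measure_mono (Icc_subset_Icc_right hab))

lemma cdfI_nonneg (μ : Measure ℝ) (x : ℝ) : 0 ≤ cdfI μ x := ENNReal.toReal_nonneg

lemma cdfI_le_one (μ : Measure ℝ) [IsProbabilityMeasure μ] (x : ℝ) : cdfI μ x ≤ 1 := by
  have h : μ (Icc 0 x) ≤ 1 := prob_le_one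
  have h2 := ENNReal.toReal_mono ENNReal.one_ne_top h
  simpa [cdfI] using h2

lemma P01_Iic_eq {μ : Measure ℝ} (hμ : μ ∈ P01) (x : ℝ) : μ (Iic x) = μ (Icc 0 x) := by
  obtain ⟨hp, h1⟩ := hμ
  have hc : μ (Iio 0) = 0 := by
    have hcompl : μ (Icc 0 1)ᶜ = 0 := by
      rw [measure_compl measurableSet_Icc (measure_ne_top μ _), h1, measure_univ, tsub_self]
    refine measure_mono_null ?_ hcompl
    intro y hy
    simp only [mem_Iio] at hy
    simp only [mem_compl_iff, mem_Icc, not_and_or, not_le]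
    left; exact hy
  refine le_antisymm ?_ (measure_mono (fun y hy => hy.2))
  have hsub : Iic x ⊆ Icc 0 x ∪ Iio 0 := by
    intro y hy
    rcases lt_or_ge y 0 with h | h
    · exact Or.inr h
    · exact Or.inl ⟨h, hy⟩
  calc μ (Iic x) ≤ μ (Icc 0 x ∪ Iio 0) := measure_mono hsub
    _ ≤ μ (Icc 0 x) + μ (Iio 0) := measure_union_le _ _
    _ = μ (Icc 0 x) := by rw [hc, add_zero]

lemma cdfI_eq_cdf {μ : Measure ℝ} (hμ : μ ∈ P01) (x : ℝ) :
    cdfI μ x = ProbabilityTheory.cdf μ x := by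
  haveI := hμ.1
  rw [ProbabilityTheory.cdf_eq_real, measureReal_def, cdfI, P01_Iic_eq hμ]

lemma cdfI_right_continuous {μ : Measure ℝ} (hμ : μ ∈ P01) (t : ℝ) :
    ContinuousWithinAt (cdfI μ) (Ici t) t := by
  have h : cdfI μ = fun x => ProbabilityTheory.cdf μ x := funext (cdfI_eq_cdf hμ)
  rw [h]
  exact (ProbabilityTheory.cdf μ).right_continuous t

lemma cdfI_dirac {t : ℝ} (ht : 0 ≤ t) (x : ℝ) :
    cdfI (Measure.dirac t) x = if t ≤ x then 1 else 0 := by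
  unfold cdfI
  rw [Measure.dirac_apply' _ measurableSet_Icc]
  by_cases h : t ≤ x
  · have hm : t ∈ Icc 0 x := ⟨ht, h⟩
    rw [indicator_of_mem hm]
    simp [h]
  · have hm : t ∉ Icc 0 x := fun hc => h hc.2
    rw [indicator_of_notMem hm]
    simp [h]

lemma cdfI_intervalIntegrable (μ : Measure ℝ) [IsFiniteMeasure μ] (a b : ℝ) :
    IntervalIntegrable (cdfI μ) volume a b :=
  (cdfI_mono μ).intervalIntegrable

/-- Part 1 as a standalone lemma. -/
lemma part1 {μ : Measure ℝ} (hμ : μ ∈ P01) {t : ℝ} (ht : t ∈ Icc (0:ℝ) 1) :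
    dW1I μ (Measure.dirac t)
      = (∫ x in (0:ℝ)..t, cdfI μ x) + ∫ x in t..(1:ℝ), (1 - cdfI μ x) := by
  haveI := hμ.1
  obtain ⟨h0, h1⟩ := ht
  have hIF := cdfI_intervalIntegrable μ
  have hID := cdfI_intervalIntegrable (Measure.dirac t)
  have hf : ∀ a b : ℝ, IntervalIntegrable
      (fun x => |cdfI μ x - cdfI (Measure.dirac t) x|) volume a b :=
    fun a b => ((hIF a b).sub (hID a b)).abs
  have hsplit := intervalIntegral.integral_add_adjacent_intervals (hf 0 t) (hf t 1)
  unfold dW1I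
  rw [← hsplit]
  congr 1
  · -- ∫₀ᵗ |F - D| = ∫₀ᵗ F
    apply intervalIntegral.integral_congr_ae
    have hne : ∀ᵐ x : ℝ, x ≠ t := by
      rw [ae_iff]
      have : {x : ℝ | ¬ x ≠ t} = {t} := by ext x; simp
      rw [this]
      exact Real.volume_singleton
    filter_upwards [hne] with x hx hxI
    rw [uIoc_of_le h0, mem_Ioc] at hxI
    have hxt : x < t := lt_of_le_of_ne hxI.2 hx
    rw [cdfI_dirac h0, if_neg (not_le.2 hxt), sub_zero, abs_of_nonneg (cdfI_nonneg μ x)]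
  · -- ∫ₜ¹ |F - D| = ∫ₜ¹ (1 - F)
    apply intervalIntegral.integral_congr
    intro x hx
    rw [uIcc_of_le h1, mem_Icc] at hx
    show |cdfI μ x - cdfI (Measure.dirac t) x| = 1 - cdfI μ x
    rw [cdfI_dirac h0, if_pos hx.1, abs_sub_comm,
      abs_of_nonneg (sub_nonneg.2 (cdfI_le_one μ x))]

/-- Reformulation: the distance is `∫₀ˢ (2F - 1) + C`. -/
lemma part1' {μ : Measure ℝ} (hμ : μ ∈ P01) {s : ℝ} (hs : s ∈ Icc (0:ℝ) 1) :
    dW1I μ (Measure.dirac s)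
      = (∫ x in (0:ℝ)..s, (2 * cdfI μ x - 1)) + ∫ x in (0:ℝ)..1, (1 - cdfI μ x) := by
  haveI := hμ.1
  rw [part1 hμ hs]
  have hIF := cdfI_intervalIntegrable μ
  have hI1F : ∀ a b : ℝ, IntervalIntegrable (fun x => 1 - cdfI μ x) volume a b :=
    fun a b => intervalIntegrable_const.sub (hIF a b)
  have hsplit : (∫ x in (0:ℝ)..s, (1 - cdfI μ x)) + ∫ x in s..(1:ℝ), (1 - cdfI μ x)
      = ∫ x in (0:ℝ)..1, (1 - cdfI μ x) :=
    intervalIntegral.integral_add_adjacent_intervals (hI1F 0 s) (hI1F s 1)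
  have h2 : ∫ x in (0:ℝ)..s, (2 * cdfI μ x - 1)
      = (∫ x in (0:ℝ)..s, cdfI μ x) - ∫ x in (0:ℝ)..s, (1 - cdfI μ x) := by
    rw [← intervalIntegral.integral_sub (hIF 0 s) (hI1F 0 s)]
    exact intervalIntegral.integral_congr (fun x _ => by ring)
  linarith

/-- The right derivative within `Ioi t` of `s ↦ ∫₀ˢ f`, for `f` right-continuous. -/
lemma hasDeriv_integral_right {f : ℝ → ℝ} (hInt : ∀ a b : ℝ, IntervalIntegrable f volume a b)
    (hmeas : Measurable f) (hcont : ContinuousWithinAt f (Ici t) t) :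
    HasDerivWithinAt (fun s => ∫ x in (0:ℝ)..s, f x) (f t) (Ioi t) t :=
  (intervalIntegral.integral_hasDerivWithinAt_right (hInt 0 t)
    hmeas.aestronglyMeasurable.stronglyMeasurableAtFilter
    (hcont.mono Ioi_subset_Ici_self)).mono Ioi_subset_Ici_self

/-- Formula for the distance of `μ` from Dirac masses, the right derivative
`2F_μ(t) - 1` of `s ↦ d(μ, δ_s)`, and the consequence that a measure in `W₁([0,1])`
is determined by its distances from all Dirac masses. -/
theorem dist_to_dirac (μ : Measure ℝ) (hμ : μ ∈ P01) :
    (∀ t ∈ Set.Icc (0:ℝ) 1,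
      dW1I μ (Measure.dirac t)
        = (∫ x in (0:ℝ)..t, cdfI μ x) + ∫ x in t..(1:ℝ), (1 - cdfI μ x)) ∧
    (∀ t ∈ Set.Ico (0:ℝ) 1,
      HasDerivWithinAt (fun s => dW1I μ (Measure.dirac s)) (2 * cdfI μ t - 1) (Set.Ioi t) t) ∧
    (∀ ν ∈ P01,
      (∀ t ∈ Set.Icc (0:ℝ) 1, dW1I μ (Measure.dirac t) = dW1I ν (Measure.dirac t)) → μ = ν) := by
  haveI := hμ.1
  refine ⟨fun t ht => part1 hμ ht, ?_, ?_⟩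
  · -- right derivative
    intro t ht
    obtain ⟨ht0, ht1⟩ := ht
    have hIF := cdfI_intervalIntegrable μ
    have hmF : Measurable (cdfI μ) := (cdfI_mono μ).measurable
    have hIg : ∀ a b : ℝ, IntervalIntegrable (fun x => 2 * cdfI μ x - 1) volume a b :=
      fun a b => ((hIF a b).const_mul 2).sub intervalIntegrable_const
    have hmg : Measurable (fun x => 2 * cdfI μ x - 1) :=
      ((hmF.const_mul 2).sub measurable_const)
    have hcg : ContinuousWithinAt (fun x => 2 * cdfI μ x - 1) (Ici t) t :=
      ((continuousWithinAt_const.mul (cdfI_right_continuous hμ t)).sub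
        continuousWithinAt_const)
    have hderiv :
        HasDerivWithinAt
          (fun s => (∫ x in (0:ℝ)..s, (2 * cdfI μ x - 1)) + ∫ x in (0:ℝ)..1, (1 - cdfI μ x))
          (2 * cdfI μ t - 1) (Ioi t) t :=
      (hasDeriv_integral_right hIg hmg hcg).add_const _
    refine hderiv.congr_of_eventuallyEq ?_ (part1' hμ ⟨ht0, ht1.le⟩)
    have hmem : Ioc t 1 ∈ 𝓝[>] t := Ioc_mem_nhdsGT_of_mem ⟨le_refl t, ht1⟩
    filter_upwards [hmem] with s hs
    exact part1' hμ ⟨ht0.trans hs.1.le, hs.2⟩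
  · -- uniqueness
    intro ν hν hd
    haveI := hν.1
    have hIF := cdfI_intervalIntegrable μ
    have hIG := cdfI_intervalIntegrable ν
    -- constants agree
    have hC : (∫ x in (0:ℝ)..1, (1 - cdfI μ x)) = ∫ x in (0:ℝ)..1, (1 - cdfI ν x) := by
      have h := hd 0 ⟨le_refl 0, zero_le_one⟩
      rw [part1' hμ ⟨le_refl 0, zero_le_one⟩, part1' hν ⟨le_refl 0, zero_le_one⟩,
        intervalIntegral.integral_same, intervalIntegral.integral_same] at h
      linarith
    -- integrals of cdfs agree on [0,1]
    have hI : ∀ t ∈ Icc (0:ℝ) 1,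
        (∫ x in (0:ℝ)..t, cdfI μ x) = ∫ x in (0:ℝ)..t, cdfI ν x := by
      intro t ht
      have h := hd t ht
      rw [part1' hμ ht, part1' hν ht] at h
      have hμ2 : ∫ x in (0:ℝ)..t, (2 * cdfI μ x - 1)
          = 2 * (∫ x in (0:ℝ)..t, cdfI μ x) - t := by
        rw [intervalIntegral.integral_sub ((hIF 0 t).const_mul 2) intervalIntegrable_const,
          intervalIntegral.integral_const_mul, intervalIntegral.integral_const]
        simp
      have hν2 : ∫ x in (0:ℝ)..t, (2 * cdfI ν x - 1)
          = 2 * (∫ x in (0:ℝ)..t, cdfI ν x) - t := by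
        rw [intervalIntegral.integral_sub ((hIG 0 t).const_mul 2) intervalIntegrable_const,
          intervalIntegral.integral_const_mul, intervalIntegral.integral_const]
        simp
      rw [hμ2, hν2] at h
      linarith
    -- cdfs agree on [0,1)
    have hF : ∀ t ∈ Ico (0:ℝ) 1, cdfI μ t = cdfI ν t := by
      intro t ht
      obtain ⟨ht0, ht1⟩ := ht
      have h1 : HasDerivWithinAt (fun s => ∫ x in (0:ℝ)..s, cdfI μ x)
          (cdfI μ t) (Ioi t) t :=
        hasDeriv_integral_right hIF (cdfI_mono μ).measurable (cdfI_right_continuous hμ t)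
      have h2 : HasDerivWithinAt (fun s => ∫ x in (0:ℝ)..s, cdfI ν x)
          (cdfI ν t) (Ioi t) t :=
        hasDeriv_integral_right hIG (cdfI_mono ν).measurable (cdfI_right_continuous hν t)
      have h2' : HasDerivWithinAt (fun s => ∫ x in (0:ℝ)..s, cdfI μ x)
          (cdfI ν t) (Ioi t) t := by
        refine h2.congr_of_eventuallyEq ?_ (hI t ⟨ht0, ht1.le⟩)
        have hmem : Ioc t 1 ∈ 𝓝[>] t := Ioc_mem_nhdsGT_of_mem ⟨le_refl t, ht1⟩
        filter_upwards [hmem] with s hs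
        exact hI s ⟨ht0.trans hs.1.le, hs.2⟩
      have huniq := uniqueDiffWithinAt_Ioi t
      rw [← h1.derivWithin huniq, ← h2'.derivWithin huniq]
    -- cdfs agree everywhere
    have hall : ∀ x : ℝ, cdfI μ x = cdfI ν x := by
      intro x
      rcases lt_or_ge x 0 with hx | hx
      · have : Icc (0:ℝ) x = ∅ := Icc_eq_empty (by exact fun h => absurd (h.trans_lt hx) (lt_irrefl 0))
        simp [cdfI, this]
      · rcases lt_or_ge x 1 with hx1 | hx1
        · exact hF x ⟨hx, hx1⟩
        · have h1μ : cdfI μ x = 1 := by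
            have hle : μ (Icc 0 1) ≤ μ (Icc 0 x) := measure_mono (Icc_subset_Icc_right hx1)
            rw [hμ.2] at hle
            have := prob_le_one (μ := μ) (s := Icc 0 x)
            have heq : μ (Icc 0 x) = 1 := le_antisymm this hle
            rw [cdfI, heq]; simp
          have h1ν : cdfI ν x = 1 := by
            have hle : ν (Icc 0 1) ≤ ν (Icc 0 x) := measure_mono (Icc_subset_Icc_right hx1)
            rw [hν.2] at hle
            have := prob_le_one (μ := ν) (s := Icc 0 x)
            have heq : ν (Icc 0 x) = 1 := le_antisymm this hle
            rw [cdfI, heq]; simp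
          rw [h1μ, h1ν]
    refine Measure.ext_of_Iic μ ν (fun a => ?_)
    rw [P01_Iic_eq hμ, P01_Iic_eq hν]
    exact (ENNReal.toReal_eq_toReal_iff' (measure_ne_top μ _) (measure_ne_top ν _)).mp (hall a)

end
end

section
/- The flip operation j on W₁([0,1]), defined by declaring the cumulative distribution function of j(μ) to be the quantile function of μ (i.e. F_{j(μ)} = F_μ⁻¹), is a surjective isometry of W₁([0,1]) of order two, and it satisfies j(δ_t) = t·δ₀ + (1−t)·δ₁ for all t ∈ [0,1]; in particular j does not map all Dirac masses to Dirac masses. -/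
open MeasureTheory Set

noncomputable section

/-- Quantile function (right-continuous generalized inverse of the CDF). -/
def quantI (μ : Measure ℝ) (t : ℝ) : ℝ := sSup {x : ℝ | cdfI μ x ≤ t}

namespace Flip

variable {μ ν : Measure ℝ} {x y s t : ℝ}

lemma cdfI_nonneg : 0 ≤ cdfI μ x := ENNReal.toReal_nonneg

lemma cdfI_of_neg (hx : x < 0) : cdfI μ x = 0 := by
  simp [cdfI, Set.Icc_eq_empty_of_lt hx]

lemma prob_of_mem (hμ : μ ∈ P01) : IsProbabilityMeasure μ := hμ.1

lemma cdfI_mono (hμ : μ ∈ P01) : Monotone (cdfI μ) := by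
  intro a b hab
  haveI := hμ.1
  exact ENNReal.toReal_mono (measure_ne_top μ _) (measure_mono (Icc_subset_Icc le_rfl hab))

lemma cdfI_le_one (hμ : μ ∈ P01) : cdfI μ x ≤ 1 := by
  haveI := hμ.1
  have : μ (Icc 0 x) ≤ 1 := prob_le_one
  simpa [cdfI] using ENNReal.toReal_mono (by simp) this

lemma cdfI_of_one_le (hμ : μ ∈ P01) (hx : 1 ≤ x) : cdfI μ x = 1 := by
  haveI := hμ.1
  have h1 : (1:ENNReal) ≤ μ (Icc 0 x) := hμ.2 ▸ measure_mono (Icc_subset_Icc le_rfl hx)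
  have h2 : μ (Icc 0 x) ≤ 1 := prob_le_one
  have : μ (Icc 0 x) = 1 := le_antisymm h2 h1
  simp [cdfI, this]

/-- right continuity of the CDF -/
lemma cdfI_rc (hμ : μ ∈ P01) (h : cdfI μ x < y) : ∃ x' > x, cdfI μ x' < y := by
  haveI := hμ.1
  set s : ℕ → Set ℝ := fun n => Icc 0 (x + 1 / (n + 1)) with hs
  have hanti : Antitone s := by
    intro a b hab
    refine Icc_subset_Icc le_rfl (by gcongr)
  have hiInter : ⋂ n, s n = Icc 0 x := by
    ext z
    simp only [mem_iInter, hs, mem_Icc]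
    constructor
    · rintro hz
      refine ⟨(hz 0).1, le_of_forall_pos_le_add fun ε hε => ?_⟩
      obtain ⟨n, hn⟩ := exists_nat_one_div_lt hε
      exact (hz n).2.trans (by push_cast; linarith)
    · rintro ⟨h0, hz⟩ n
      exact ⟨h0, hz.trans (le_add_of_nonneg_right (by positivity))⟩
  have htend : Filter.Tendsto (fun n => μ (s n)) Filter.atTop (nhds (μ (Icc 0 x))) := by
    have := tendsto_measure_iInter_atTop
      (μ := μ) (s := s) (fun n => measurableSet_Icc.nullMeasurableSet) hanti
      ⟨0, measure_ne_top μ _⟩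
    rwa [hiInter] at this
  have htend2 : Filter.Tendsto (fun n => (μ (s n)).toReal) Filter.atTop (nhds (cdfI μ x)) :=
    (ENNReal.tendsto_toReal (measure_ne_top μ _)).comp htend
  have := htend2.eventually_lt_const h
  obtain ⟨n, hn⟩ := this.exists
  exact ⟨x + 1 / (n + 1), lt_add_of_pos_right x (by positivity), hn⟩

lemma S_nonempty (ht : 0 ≤ t) : {x : ℝ | cdfI μ x ≤ t}.Nonempty :=
  ⟨-1, by simpa [cdfI_of_neg (by norm_num : (-1:ℝ) < 0)] using ht⟩

lemma S_bdd (hμ : μ ∈ P01) (ht : t < 1) : BddAbove {x : ℝ | cdfI μ x ≤ t} := by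
  refine ⟨1, fun z hz => ?_⟩
  by_contra hc
  push_neg at hc
  have := cdfI_of_one_le hμ hc.le
  simp only [mem_setOf_eq, this] at hz
  linarith

lemma quantI_of_neg (ht : t < 0) : quantI μ t = 0 := by
  have : {x : ℝ | cdfI μ x ≤ t} = ∅ := by
    ext z; simp only [mem_setOf_eq, mem_empty_iff_false, iff_false, not_le]
    exact lt_of_lt_of_le ht cdfI_nonneg
  simp [quantI, this, Real.sSup_empty]

lemma quantI_nonneg (hμ : μ ∈ P01) (ht0 : 0 ≤ t) (ht1 : t < 1) : 0 ≤ quantI μ t := by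
  by_contra hc
  push_neg at hc
  have hw : quantI μ t / 2 ∈ {x : ℝ | cdfI μ x ≤ t} := by
    simp only [mem_setOf_eq, cdfI_of_neg (by linarith : quantI μ t / 2 < 0)]
    exact ht0
  have h2 : quantI μ t / 2 ≤ quantI μ t := le_csSup (S_bdd hμ ht1) hw
  linarith

lemma quantI_le_one (hμ : μ ∈ P01) (ht0 : 0 ≤ t) (ht1 : t < 1) : quantI μ t ≤ 1 :=
  csSup_le (S_nonempty ht0) fun z hz => by
    by_contra hc; push_neg at hc
    have := cdfI_of_one_le hμ hc.le
    simp only [mem_setOf_eq, this] at hz; linarith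

lemma le_quantI (hμ : μ ∈ P01) (ht1 : t < 1) (h : cdfI μ x ≤ t) : x ≤ quantI μ t :=
  le_csSup (S_bdd hμ ht1) h

lemma cdfI_le_of_lt_quantI (hμ : μ ∈ P01) (ht0 : 0 ≤ t) (h : x < quantI μ t) :
    cdfI μ x ≤ t := by
  obtain ⟨z, hz, hxz⟩ := exists_lt_of_lt_csSup (S_nonempty ht0) h
  exact (cdfI_mono hμ hxz.le).trans hz

/-- the corrected quantile function, a genuine Stieltjes function -/
def qf (μ : Measure ℝ) (t : ℝ) : ℝ := if t < 1 then quantI μ t else 1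

lemma qf_nonneg (hμ : μ ∈ P01) (t : ℝ) : 0 ≤ qf μ t := by
  unfold qf
  split_ifs with h
  · rcases lt_or_ge t 0 with ht | ht
    · simp [quantI_of_neg ht]
    · exact quantI_nonneg hμ ht h
  · norm_num

lemma qf_mono (hμ : μ ∈ P01) : Monotone (qf μ) := by
  intro a b hab
  unfold qf
  split_ifs with ha hb hb
  · rcases lt_or_ge a 0 with ha0 | ha0
    · rw [quantI_of_neg ha0]
      rcases lt_or_ge b 0 with hb0 | hb0
      · rw [quantI_of_neg hb0]
      · exact quantI_nonneg hμ hb0 hb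
    · exact csSup_le_csSup (S_bdd hμ hb) (S_nonempty ha0)
        (fun z hz => le_trans hz hab)
  · rcases lt_or_ge a 0 with ha0 | ha0
    · rw [quantI_of_neg ha0]; norm_num
    · exact quantI_le_one hμ ha0 ha
  · exact absurd (lt_of_le_of_lt hab hb) ha
  · exact le_refl 1

-- PART 2


lemma qf_le_one (hμ : μ ∈ P01) (t : ℝ) : qf μ t ≤ 1 := by
  unfold qf; split_ifs with h
  · rcases lt_or_ge t 0 with ht | ht
    · rw [quantI_of_neg ht]; norm_num
    · exact quantI_le_one hμ ht h
  · exact le_rfl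

lemma qf_of_neg (ht : t < 0) : qf μ t = 0 := by
  rw [qf, if_pos (by linarith), quantI_of_neg ht]

lemma qf_of_one_le (ht : 1 ≤ t) : qf μ t = 1 := by
  rw [qf, if_neg (not_lt.2 ht)]

/-- the ε-claim: approximate right continuity of the quantile function -/
lemma quantI_approx (hμ : μ ∈ P01) (ht0 : 0 ≤ t) (ht1 : t < 1) {ε : ℝ} (hε : 0 < ε) :
    ∃ t' > t, t' < 1 ∧ quantI μ t' ≤ quantI μ t + ε := by
  by_contra hc
  push_neg at hc
  have key : ∀ t' : ℝ, t < t' → t' < 1 → cdfI μ (quantI μ t + ε / 2) ≤ t' := by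
    intro t' h1 h2
    have hgt : quantI μ t + ε < quantI μ t' := hc t' h1 h2
    have hlt : quantI μ t + ε / 2 < quantI μ t' := by linarith
    obtain ⟨z, hz, hmz⟩ := exists_lt_of_lt_csSup (S_nonempty (le_trans ht0 h1.le)) hlt
    exact (cdfI_mono hμ hmz.le).trans hz
  have hcdf : cdfI μ (quantI μ t + ε / 2) ≤ t := by
    refine le_of_forall_pos_le_add fun δ hδ => ?_
    have h1 : t < min (t + δ) ((t + 1) / 2) := lt_min (by linarith) (by linarith)
    have h2 : min (t + δ) ((t + 1) / 2) < 1 := lt_of_le_of_lt (min_le_right _ _) (by linarith)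
    exact (key _ h1 h2).trans (min_le_left _ _)
  have := le_quantI hμ ht1 hcdf
  linarith

lemma qf_rc (hμ : μ ∈ P01) : ∀ x, ContinuousWithinAt (qf μ) (Ici x) x := by
  intro x
  rcases lt_or_ge x 0 with hx0 | hx0
  · -- locally constant 0
    have hev : ∀ᶠ y in nhdsWithin x (Ici x), qf μ y = qf μ x := by
      refine Filter.eventually_iff_exists_mem.2 ⟨Iio 0 ∩ Ici x, ?_, ?_⟩
      · exact Filter.inter_mem (nhdsWithin_le_nhds (Iio_mem_nhds hx0)) self_mem_nhdsWithin
      · intro y hy; rw [qf_of_neg hy.1, qf_of_neg hx0]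
    exact (continuousWithinAt_const (b := qf μ x)).congr_of_eventuallyEq hev rfl
  rcases lt_or_ge x 1 with hx1 | hx1
  · -- main case
    rw [ContinuousWithinAt, tendsto_order]
    constructor
    · intro a ha
      exact Filter.eventually_iff_exists_mem.2 ⟨Ici x, self_mem_nhdsWithin,
        fun y hy => lt_of_lt_of_le ha (qf_mono hμ hy)⟩
    · intro b hb
      have hfx : qf μ x = quantI μ x := if_pos hx1
      obtain ⟨t', ht', ht'1, hle⟩ := quantI_approx hμ hx0 hx1
        (ε := (b - qf μ x) / 2) (by rw [hfx] at hb ⊢; linarith)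
      have hfb : qf μ t' < b := by
        rw [qf, if_pos ht'1]; rw [hfx] at hle; linarith
      refine Filter.eventually_iff_exists_mem.2 ⟨Iio t' ∩ Ici x, ?_, ?_⟩
      · exact Filter.inter_mem (nhdsWithin_le_nhds (Iio_mem_nhds ht')) self_mem_nhdsWithin
      · intro y hy
        exact lt_of_le_of_lt (qf_mono hμ hy.1.le) hfb
  · -- locally constant 1
    have hev : ∀ᶠ y in nhdsWithin x (Ici x), qf μ y = qf μ x := by
      refine Filter.eventually_iff_exists_mem.2 ⟨Ici x, self_mem_nhdsWithin, fun y hy => ?_⟩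
      rw [qf_of_one_le (le_trans hx1 hy), qf_of_one_le hx1]
    exact (continuousWithinAt_const (b := qf μ x)).congr_of_eventuallyEq hev rfl

/-- The quantile function as a Stieltjes function. -/
def qsf (μ : Measure ℝ) (hμ : μ ∈ P01) : StieltjesFunction ℝ :=
  ⟨qf μ, qf_mono hμ, qf_rc hμ⟩

open scoped Classical in
/-- The flip map. -/
def j (μ : Measure ℝ) : Measure ℝ :=
  if h : μ ∈ P01 then (qsf μ h).measure else μ

lemma j_apply (hμ : μ ∈ P01) : j μ = (qsf μ hμ).measure := dif_pos hμ

lemma qf_tendsto_atBot (hμ : μ ∈ P01) :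
    Filter.Tendsto (qf μ) Filter.atBot (nhds 0) := by
  refine tendsto_const_nhds.congr' ?_
  filter_upwards [Filter.eventually_le_atBot (-1 : ℝ)] with y hy
  rw [qf_of_neg (by linarith)]

lemma qf_tendsto_atTop (hμ : μ ∈ P01) :
    Filter.Tendsto (qf μ) Filter.atTop (nhds 1) := by
  refine tendsto_const_nhds.congr' ?_
  filter_upwards [Filter.eventually_ge_atTop (1 : ℝ)] with y hy
  rw [qf_of_one_le hy]

lemma leftLim_qf_zero (hμ : μ ∈ P01) : Function.leftLim (qf μ) 0 = 0 := by
  refine leftLim_eq_of_tendsto ?_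
  refine tendsto_const_nhds.congr' ?_
  filter_upwards [self_mem_nhdsWithin] with y (hy : y < 0)
  rw [qf_of_neg hy]

lemma cdfI_j (hμ : μ ∈ P01) (x : ℝ) : cdfI (j μ) x = qf μ x := by
  rcases lt_or_ge x 0 with hx | hx
  · rw [cdfI_of_neg hx, qf_of_neg (by linarith)]
  · rw [cdfI, j_apply hμ, StieltjesFunction.measure_Icc]
    show (ENNReal.ofReal (qf μ x - Function.leftLim (qf μ) 0)).toReal = qf μ x
    rw [leftLim_qf_zero hμ, sub_zero, ENNReal.toReal_ofReal (qf_nonneg hμ x)]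

lemma j_mem (hμ : μ ∈ P01) : j μ ∈ P01 := by
  rw [j_apply hμ]
  constructor
  · refine ⟨?_⟩
    rw [(qsf μ hμ).measure_univ (qf_tendsto_atBot hμ) (qf_tendsto_atTop hμ)]
    simp
  · show (qsf μ hμ).measure (Icc 0 1) = 1
    rw [StieltjesFunction.measure_Icc]
    show ENNReal.ofReal (qf μ 1 - Function.leftLim (qf μ) 0) = 1
    rw [leftLim_qf_zero hμ, qf_of_one_le le_rfl, sub_zero, ENNReal.ofReal_one]

lemma measure_Iio_zero (hμ : μ ∈ P01) : μ (Iio 0) = 0 := by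
  haveI := hμ.1
  have hc : μ (Icc 0 1)ᶜ = 0 := by
    rw [measure_compl measurableSet_Icc (measure_ne_top μ _), hμ.2, measure_univ, tsub_self]
  refine measure_mono_null (fun z hz => ?_) hc
  simp only [mem_compl_iff, mem_Icc, not_and_or, not_le]
  exact Or.inl hz

lemma measure_Iic_eq (hμ : μ ∈ P01) (x : ℝ) : μ (Iic x) = ENNReal.ofReal (cdfI μ x) := by
  haveI := hμ.1
  rcases lt_or_ge x 0 with hx | hx
  · rw [cdfI_of_neg hx, ENNReal.ofReal_zero]
    exact measure_mono_null (fun z hz => lt_of_le_of_lt hz hx) (measure_Iio_zero hμ)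
  · have hun : Iic x = Iio 0 ∪ Icc 0 x := by
      ext z; simp only [mem_Iic, mem_union, mem_Iio, mem_Icc]
      constructor
      · intro h; rcases lt_or_ge z 0 with h0 | h0
        · exact Or.inl h0
        · exact Or.inr ⟨h0, h⟩
      · rintro (h | ⟨_, h⟩); exacts [le_trans h.le hx, h]
    have h1 : μ (Iic x) ≤ μ (Icc 0 x) := by
      rw [hun]
      refine le_trans (measure_union_le _ _) ?_
      rw [measure_Iio_zero hμ, zero_add]
    have h2 : μ (Icc 0 x) ≤ μ (Iic x) := measure_mono (fun z hz => hz.2)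
    rw [le_antisymm h1 h2, cdfI, ENNReal.ofReal_toReal (measure_ne_top μ _)]

lemma P01_ext (hμ : μ ∈ P01) (hν : ν ∈ P01)
    (h : ∀ x ∈ Ico (0:ℝ) 1, cdfI μ x = cdfI ν x) : μ = ν := by
  haveI := hμ.1; haveI := hν.1
  refine Measure.ext_of_Iic μ ν fun x => ?_
  rw [measure_Iic_eq hμ, measure_Iic_eq hν]
  rcases lt_or_ge x 0 with hx | hx
  · rw [cdfI_of_neg hx, cdfI_of_neg hx]
  rcases lt_or_ge x 1 with hx1 | hx1
  · rw [h x ⟨hx, hx1⟩]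
  · rw [cdfI_of_one_le hμ hx1, cdfI_of_one_le hν hx1]

-- PART 3


lemma cdfI_j_Ico (hμ : μ ∈ P01) (hx : x ∈ Ico (0:ℝ) 1) : cdfI (j μ) x = quantI μ x := by
  rw [cdfI_j hμ, qf, if_pos hx.2]

lemma quantI_j (hμ : μ ∈ P01) (hx : x ∈ Ico (0:ℝ) 1) : quantI (j μ) x = cdfI μ x := by
  obtain ⟨hx0, hx1⟩ := hx
  have hjm := j_mem hμ
  have hub : ∀ z ∈ {z : ℝ | cdfI (j μ) z ≤ x}, z ≤ cdfI μ x := by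
    intro z hz
    simp only [mem_setOf_eq] at hz
    rcases lt_or_ge z 0 with hz0 | hz0
    · exact hz0.le.trans cdfI_nonneg
    rcases le_or_gt 1 z with hz1 | hz1
    · rw [cdfI_j hμ, qf_of_one_le hz1] at hz; linarith
    rw [cdfI_j hμ, qf, if_pos hz1] at hz
    by_contra hc
    push_neg at hc
    obtain ⟨x', hx', hcx'⟩ := cdfI_rc hμ hc
    have : x' ≤ quantI μ z := le_quantI hμ hz1 hcx'.le
    linarith
  have hne : {z : ℝ | cdfI (j μ) z ≤ x}.Nonempty := S_nonempty hx0
  refine le_antisymm (csSup_le hne hub) ?_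
  refine le_of_forall_lt fun w hw => ?_
  have hwmem : (w + cdfI μ x) / 2 ∈ {z : ℝ | cdfI (j μ) z ≤ x} := by
    simp only [mem_setOf_eq]
    rcases lt_or_ge ((w + cdfI μ x) / 2) 0 with hneg | hpos
    · rw [cdfI_of_neg hneg]; exact hx0
    · have hlt1 : (w + cdfI μ x) / 2 < 1 := by
        have := cdfI_le_one (x := x) hμ; linarith
      rw [cdfI_j hμ, qf, if_pos hlt1]
      refine csSup_le (S_nonempty hpos) fun z hz => ?_
      simp only [mem_setOf_eq] at hz
      by_contra hc
      push_neg at hc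
      have := cdfI_mono hμ hc.le
      linarith
  calc w < (w + cdfI μ x) / 2 := by linarith
    _ ≤ sSup {z : ℝ | cdfI (j μ) z ≤ x} := le_csSup ⟨cdfI μ x, hub⟩ hwmem

lemma j_j (hμ : μ ∈ P01) : j (j μ) = μ := by
  refine P01_ext (j_mem (j_mem hμ)) hμ fun x hx => ?_
  rw [cdfI_j_Ico (j_mem hμ) hx, quantI_j hμ hx]

/-- The Fubini key lemma. -/
lemma key (hμ : μ ∈ P01) (hν : ν ∈ P01) :
    ∫⁻ t in Ico (0:ℝ) 1, ENNReal.ofReal (quantI μ t - quantI ν t)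
      = ∫⁻ x in Ico (0:ℝ) 1, ENNReal.ofReal (cdfI ν x - cdfI μ x) := by
  set A : Set (ℝ × ℝ) :=
    (Ico (0:ℝ) 1 ×ˢ Ico (0:ℝ) 1) ∩ {p | cdfI μ p.1 ≤ p.2} ∩ {p | p.2 < cdfI ν p.1} with hA
  have hmA : MeasurableSet A := by
    refine (((measurableSet_Ico.prod measurableSet_Ico).inter ?_).inter ?_)
    · exact measurableSet_le ((cdfI_mono hμ).measurable.comp measurable_fst) measurable_snd
    · exact measurableSet_lt measurable_snd ((cdfI_mono hν).measurable.comp measurable_fst)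
  have h1 : (volume.prod volume) A
      = ∫⁻ x in Ico (0:ℝ) 1, ENNReal.ofReal (cdfI ν x - cdfI μ x) := by
    rw [Measure.prod_apply hmA, ← lintegral_indicator measurableSet_Ico]
    refine lintegral_congr fun x => ?_
    rcases em (x ∈ Ico (0:ℝ) 1) with hx | hx
    · have hsl : Prod.mk x ⁻¹' A = Ico (cdfI μ x) (cdfI ν x) := by
        ext u
        simp only [hA, mem_preimage, mem_inter_iff, mem_prod, mem_setOf_eq, mem_Ico]
        constructor
        · rintro ⟨⟨⟨_, _⟩, h2⟩, h3⟩; exact ⟨h2, h3⟩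
        · rintro ⟨h2, h3⟩
          exact ⟨⟨⟨hx, cdfI_nonneg.trans h2, h3.trans_le (cdfI_le_one hν)⟩, h2⟩, h3⟩
      rw [hsl, Real.volume_Ico, indicator_of_mem hx]
    · have hsl : Prod.mk x ⁻¹' A = ∅ := by
        ext u
        simp only [hA, mem_preimage, mem_inter_iff, mem_prod, mem_setOf_eq,
          mem_empty_iff_false, iff_false]
        rintro ⟨⟨⟨h0, _⟩, _⟩, _⟩
        exact hx h0
      rw [hsl, measure_empty, indicator_of_notMem hx]
  have h2 : (volume.prod volume) A
      = ∫⁻ u in Ico (0:ℝ) 1, ENNReal.ofReal (quantI μ u - quantI ν u) := by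
    rw [Measure.prod_apply_symm hmA, ← lintegral_indicator measurableSet_Ico]
    refine lintegral_congr fun u => ?_
    rcases em (u ∈ Ico (0:ℝ) 1) with hu | hu
    · obtain ⟨hu0, hu1⟩ := hu
      have hsub1 : Ioo (quantI ν u) (quantI μ u) ⊆ (fun x => (x, u)) ⁻¹' A := by
        intro z hz
        obtain ⟨hz1, hz2⟩ := hz
        have hz0 : (0:ℝ) ≤ z := (quantI_nonneg hν hu0 hu1).trans hz1.le
        have hzlt1 : z < 1 := lt_of_lt_of_le hz2 (quantI_le_one hμ hu0 hu1)
        refine ⟨⟨⟨⟨hz0, hzlt1⟩, hu0, hu1⟩, cdfI_le_of_lt_quantI hμ hu0 hz2⟩, ?_⟩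
        show u < cdfI ν z
        by_contra hc
        push_neg at hc
        exact absurd (le_quantI hν hu1 hc) (not_le.2 hz1)
      have hsub2 : (fun x => (x, u)) ⁻¹' A ⊆ Icc (quantI ν u) (quantI μ u) := by
        rintro z ⟨⟨⟨_, _⟩, hle⟩, hlt⟩
        refine ⟨?_, le_quantI hμ hu1 hle⟩
        by_contra hc
        push_neg at hc
        exact absurd (cdfI_le_of_lt_quantI hν hu0 hc) (not_le.2 hlt)
      have hm1 := measure_mono (μ := (volume : Measure ℝ)) hsub1
      have hm2 := measure_mono (μ := (volume : Measure ℝ)) hsub2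
      rw [Real.volume_Ioo] at hm1
      rw [Real.volume_Icc] at hm2
      have humem : u ∈ Ico (0:ℝ) 1 := ⟨hu0, hu1⟩
      rw [indicator_of_mem humem]
      exact le_antisymm hm2 hm1
    · have hsl : (fun x => (x, u)) ⁻¹' A = ∅ := by
        ext z
        simp only [hA, mem_preimage, mem_inter_iff, mem_prod, mem_setOf_eq,
          mem_empty_iff_false, iff_false]
        rintro ⟨⟨⟨_, h0⟩, _⟩, _⟩
        exact hu h0
      rw [hsl, measure_empty, indicator_of_notMem hu]
  rw [← h2, h1]

-- PART 4


lemma ofReal_abs_sub (a b : ℝ) :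
    ENNReal.ofReal |a - b| = ENNReal.ofReal (a - b) + ENNReal.ofReal (b - a) := by
  rcases le_total a b with h | h
  · rw [abs_of_nonpos (sub_nonpos.2 h), neg_sub, ENNReal.ofReal_of_nonpos (sub_nonpos.2 h),
      zero_add]
  · rw [abs_of_nonneg (sub_nonneg.2 h), ENNReal.ofReal_of_nonpos (sub_nonpos.2 h), add_zero]

lemma dW1I_eq (hμ : μ ∈ P01) (hν : ν ∈ P01) :
    dW1I μ ν = ((∫⁻ x in Ico (0:ℝ) 1, ENNReal.ofReal (cdfI μ x - cdfI ν x))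
      + ∫⁻ x in Ico (0:ℝ) 1, ENNReal.ofReal (cdfI ν x - cdfI μ x)).toReal := by
  have hmeas : Measurable fun x => |cdfI μ x - cdfI ν x| :=
    ((cdfI_mono hμ).measurable.sub (cdfI_mono hν).measurable).abs
  rw [dW1I, intervalIntegral.integral_of_le zero_le_one,
    integral_Ioc_eq_integral_Ioo, ← integral_Ico_eq_integral_Ioo,
    integral_eq_lintegral_of_nonneg_ae
      (Filter.Eventually.of_forall fun x => abs_nonneg _) hmeas.aestronglyMeasurable.restrict]
  congr 1
  rw [← lintegral_add_left (f := fun x => ENNReal.ofReal (cdfI μ x - cdfI ν x)) ((cdfI_mono hμ).measurable.sub (cdfI_mono hν).measurable).ennreal_ofReal]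
  exact lintegral_congr fun x => ofReal_abs_sub _ _

lemma isom (hμ : μ ∈ P01) (hν : ν ∈ P01) : dW1I (j μ) (j ν) = dW1I μ ν := by
  rw [dW1I_eq (j_mem hμ) (j_mem hν), dW1I_eq hμ hν]
  have e1 : ∫⁻ x in Ico (0:ℝ) 1, ENNReal.ofReal (cdfI (j μ) x - cdfI (j ν) x)
      = ∫⁻ x in Ico (0:ℝ) 1, ENNReal.ofReal (quantI μ x - quantI ν x) := by
    refine setLIntegral_congr_fun measurableSet_Ico
      (fun x hx => ?_)
    rw [cdfI_j_Ico hμ hx, cdfI_j_Ico hν hx]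
  have e2 : ∫⁻ x in Ico (0:ℝ) 1, ENNReal.ofReal (cdfI (j ν) x - cdfI (j μ) x)
      = ∫⁻ x in Ico (0:ℝ) 1, ENNReal.ofReal (quantI ν x - quantI μ x) := by
    refine setLIntegral_congr_fun measurableSet_Ico
      (fun x hx => ?_)
    rw [cdfI_j_Ico hμ hx, cdfI_j_Ico hν hx]
  rw [e1, e2, key hμ hν, key hν hμ, add_comm]

-- Dirac computations

lemma dirac_mem (ht : t ∈ Icc (0:ℝ) 1) : Measure.dirac t ∈ P01 :=
  ⟨by infer_instance, Measure.dirac_apply_of_mem ht⟩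

lemma cdfI_dirac (ht : t ∈ Icc (0:ℝ) 1) (x : ℝ) :
    cdfI (Measure.dirac t) x = if t ≤ x then 1 else 0 := by
  rw [cdfI, Measure.dirac_apply' _ measurableSet_Icc]
  by_cases h : t ≤ x
  · have hmem : t ∈ Icc (0:ℝ) x := ⟨ht.1, h⟩
    rw [if_pos h, indicator_of_mem hmem]; simp
  · rw [if_neg h, indicator_of_notMem (fun hc => h hc.2)]; simp

def ρ (t : ℝ) : Measure ℝ :=
  ENNReal.ofReal t • Measure.dirac (0:ℝ) + ENNReal.ofReal (1 - t) • Measure.dirac (1:ℝ)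

lemma ρ_apply (t : ℝ) (s : Set ℝ) (hs : MeasurableSet s) :
    ρ t s = ENNReal.ofReal t * s.indicator 1 0 + ENNReal.ofReal (1 - t) * s.indicator 1 1 := by
  rw [ρ, Measure.add_apply, Measure.smul_apply, Measure.smul_apply,
    Measure.dirac_apply' _ hs, Measure.dirac_apply' _ hs, smul_eq_mul, smul_eq_mul]

lemma ρ_mem (ht : t ∈ Icc (0:ℝ) 1) : ρ t ∈ P01 := by
  have huniv : ρ t univ = 1 := by
    rw [ρ_apply t univ MeasurableSet.univ]
    simp only [indicator_univ, Pi.one_apply, mul_one]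
    rw [← ENNReal.ofReal_add ht.1 (by linarith [ht.2])]
    norm_num
  refine ⟨⟨huniv⟩, ?_⟩
  rw [ρ_apply t _ measurableSet_Icc, indicator_of_mem (by norm_num : (0:ℝ) ∈ Icc (0:ℝ) 1),
    indicator_of_mem (by norm_num : (1:ℝ) ∈ Icc (0:ℝ) 1)]
  simp only [Pi.one_apply, mul_one]
  rw [← ENNReal.ofReal_add ht.1 (by linarith [ht.2])]
  norm_num

lemma cdfI_ρ (ht : t ∈ Icc (0:ℝ) 1) (hx : x ∈ Ico (0:ℝ) 1) : cdfI (ρ t) x = t := by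
  have h0 : (0:ℝ) ∈ Icc (0:ℝ) x := ⟨le_rfl, hx.1⟩
  have h1 : (1:ℝ) ∉ Icc (0:ℝ) x := fun hc => absurd hc.2 (not_le.2 hx.2)
  rw [cdfI, ρ_apply t _ measurableSet_Icc, indicator_of_mem h0, indicator_of_notMem h1]
  simp only [Pi.one_apply, mul_one, mul_zero, add_zero]
  rw [ENNReal.toReal_ofReal ht.1]

lemma quantI_dirac (ht : t ∈ Icc (0:ℝ) 1) (hx : x ∈ Ico (0:ℝ) 1) :
    quantI (Measure.dirac t) x = t := by
  have hset : {y : ℝ | cdfI (Measure.dirac t) y ≤ x} = Iio t := by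
    ext y
    rw [mem_setOf_eq, cdfI_dirac ht y]
    by_cases h : t ≤ y
    · simp only [if_pos h, mem_Iio]
      constructor
      · intro h1; linarith [hx.2]
      · intro h1; linarith
    · simp only [if_neg h, mem_Iio]
      constructor
      · intro _; exact not_le.1 h
      · intro _; exact hx.1
  rw [quantI, hset, csSup_Iio]

lemma j_dirac (ht : t ∈ Icc (0:ℝ) 1) : j (Measure.dirac t) = ρ t := by
  refine P01_ext (j_mem (dirac_mem ht)) (ρ_mem ht) fun x hx => ?_
  rw [cdfI_j_Ico (dirac_mem ht) hx, quantI_dirac ht hx, cdfI_ρ ht hx]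

lemma not_all_dirac :
    ¬ (∀ t ∈ Set.Icc (0:ℝ) 1, ∃ s : ℝ, j (Measure.dirac t) = Measure.dirac s) := by
  intro h
  obtain ⟨s, hs⟩ := h (1/2) (by norm_num)
  rw [j_dirac (by norm_num)] at hs
  have h0 := congrArg (fun m : Measure ℝ => m {0}) hs
  rw [ρ_apply _ _ (measurableSet_singleton 0),
    indicator_of_mem (mem_singleton 0), Measure.dirac_apply' _ (measurableSet_singleton 0)] at h0
  rw [indicator_of_notMem (by norm_num : (1:ℝ) ∉ ({0} : Set ℝ))] at h0
  simp only [Pi.one_apply, mul_one, mul_zero, add_zero] at h0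
  by_cases hs0 : s ∈ ({0} : Set ℝ)
  · rw [indicator_of_mem hs0] at h0
    simp only [Pi.one_apply] at h0
    have := congrArg ENNReal.toReal h0
    rw [ENNReal.toReal_ofReal (by norm_num)] at this
    norm_num at this
  · rw [indicator_of_notMem hs0] at h0
    rw [ENNReal.ofReal_eq_zero] at h0
    norm_num at h0

end Flip

/-- The flip operation `j` on `W₁([0,1])`, defined by `F_{j(μ)} = F_μ⁻¹`, is a
well-defined surjective isometry of order two, with `j(δ_t) = t·δ₀ + (1-t)·δ₁`;
in particular `j` does not map all Dirac masses to Dirac masses. -/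
theorem flip_isometry :
    ∃ j : Measure ℝ → Measure ℝ,
      (∀ μ ∈ P01, j μ ∈ P01 ∧ ∀ x ∈ Set.Ico (0:ℝ) 1, cdfI (j μ) x = quantI μ x) ∧
      Set.SurjOn j P01 P01 ∧
      (∀ μ ∈ P01, ∀ ν ∈ P01, dW1I (j μ) (j ν) = dW1I μ ν) ∧
      (∀ μ ∈ P01, j (j μ) = μ) ∧
      (∀ t ∈ Set.Icc (0:ℝ) 1,
        j (Measure.dirac t)
          = ENNReal.ofReal t • Measure.dirac (0:ℝ) + ENNReal.ofReal (1 - t) • Measure.dirac (1:ℝ)) ∧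
      ¬ (∀ t ∈ Set.Icc (0:ℝ) 1, ∃ s : ℝ, j (Measure.dirac t) = Measure.dirac s) := by
  refine ⟨Flip.j,
    fun μ hμ => ⟨Flip.j_mem hμ, fun x hx => Flip.cdfI_j_Ico hμ hx⟩,
    fun ν hν => ⟨Flip.j ν, Flip.j_mem hν, Flip.j_j hν⟩,
    fun μ hμ ν hν => Flip.isom hμ hν,
    fun μ hμ => Flip.j_j hμ,
    fun t ht => Flip.j_dirac ht,
    Flip.not_all_dirac⟩
end
end
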